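/- arXiv:1508.07827 — 5 statements merged into one kernel-verified Lean document; each statement's English description precedes it below -/
import Mathlib

section
/- Let g be a piecewise constant survival distribution function with division points 0 = t_0 < t_1 < ⋯ < t_N < t_{N+1} = ∞, and let B be a standard barrier with P(τ_B > t) = g(t) for all t ≥ 0. Then u(t,x) := P(W_t ≤ x, τ_B > t) satisfies the inductive scheme: u(0,x) = 1 if x ≥ 0 and u(0,x) = 0 if x < 0; for each k ≥ 0 and t ∈ (t_k, t_{k+1}), u(t,x) = E[u(t_k, x + W_{t−t_k})]; and for each k with 0 ≤ k ≤ N−1 (and k = N−1 replaced appropriately, i.e. all k ≥ 0 with t_{k+1} < ∞), u(t_{k+1}, x) = min{E[u(t_k, x + W_{t_{k+1}−t_k})], g(t_{k+1})}. -/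
open MeasureTheory ProbabilityTheory Filter Set
open scoped ENNReal

noncomputable section

/-- A barrier: a closed subset of `[0,∞) × ℝ` closed upwards in the space variable. -/
def IsBarrier (B : Set (ℝ × ℝ)) : Prop :=
  IsClosed B ∧ (∀ p ∈ B, 0 ≤ p.1) ∧ ∀ t x y : ℝ, (t, x) ∈ B → x ≤ y → (t, y) ∈ B

/-- The boundary function `b(t) = inf {x : (t,x) ∈ B}` of a barrier (with `inf ∅ = ∞`). -/
def boundary (B : Set (ℝ × ℝ)) (t : ℝ) : EReal :=
  ⨅ x ∈ {x : ℝ | (t, x) ∈ B}, (x : EReal)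

/-- A standard barrier: `b(0) = 0` and once the boundary is `-∞` it stays `-∞`. -/
def IsStandardBarrier (B : Set (ℝ × ℝ)) : Prop :=
  IsBarrier B ∧ boundary B 0 = 0 ∧
    ∀ t s : ℝ, 0 < t → boundary B t = ⊥ → t < s → boundary B s = ⊥

/-- A standard Brownian motion: continuous paths, `W₀ = 0` a.s., Gaussian increments
`W_t - W_s ~ N(0, t-s)` independent of the past. -/
structure IsStandardBM {Ω : Type*} [MeasurableSpace Ω] (P : Measure Ω)
    (W : ℝ → Ω → ℝ) : Prop where
  meas : ∀ t, StronglyMeasurable (W t)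
  cont : ∀ ω, Continuous fun t => W t ω
  init : ∀ᵐ ω ∂P, W 0 ω = 0
  incr : ∀ s t : ℝ, 0 ≤ s → s ≤ t →
    P.map (fun ω => W t ω - W s ω) = gaussianReal 0 (Real.toNNReal (t - s))
  indep : ∀ s t : ℝ, 0 ≤ s → s ≤ t →
    Indep (MeasurableSpace.comap (fun ω => W t ω - W s ω) inferInstance)
      (⨆ u : Set.Icc (0 : ℝ) s, MeasurableSpace.comap (W u) inferInstance) P

/-- The first passage time `τ_B = inf {t > 0 : W_t ≥ b(t)}` (with values in `EReal`,
`inf ∅ = ∞`). -/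
def tauB {Ω : Type*} (B : Set (ℝ × ℝ)) (W : ℝ → Ω → ℝ) (ω : Ω) : EReal :=
  ⨅ r : {r : ℝ // 0 < r ∧ boundary B r ≤ ((W r ω : ℝ) : EReal)}, ((r.1 : ℝ) : EReal)

/-- The survival distribution function `g(t) = P(τ_B > t)` of a barrier. -/
def survival {Ω : Type*} [MeasurableSpace Ω] (P : Measure Ω) (B : Set (ℝ × ℝ))
    (W : ℝ → Ω → ℝ) (t : ℝ) : ℝ :=
  (P {ω | (t : EReal) < tauB B W ω}).toReal

/-- `u(t,x) = P(W_t ≤ x, τ_B > t)`. -/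
def uFun {Ω : Type*} [MeasurableSpace Ω] (P : Measure Ω) (B : Set (ℝ × ℝ))
    (W : ℝ → Ω → ℝ) (t x : ℝ) : ℝ :=
  (P {ω | W t ω ≤ x ∧ (t : EReal) < tauB B W ω}).toReal

/-- A survival distribution function. -/
structure IsSurvival (g : ℝ → ℝ) : Prop where
  mono : AntitoneOn g (Set.Ici 0)
  rc : ∀ t : ℝ, 0 ≤ t → ContinuousWithinAt g (Set.Ici t) t
  init : g 0 = 1
  mem : ∀ t : ℝ, 0 ≤ t → g t ∈ Set.Icc (0 : ℝ) 1

/-- The value `v(t,x)` of the optimal stopping problem associated with a survival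
distribution function `g`: the infimum over stopping times `γ` of the natural filtration
of `W` with values in `[0,t]` of `E[g(t-γ) 1_{γ<t} + 1_{γ=t, x+W_t ≥ 0}]`. -/
def stopValue {Ω : Type*} [MeasurableSpace Ω] (P : Measure Ω) (W : ℝ → Ω → ℝ)
    (hW : ∀ s, StronglyMeasurable (W s)) (g : ℝ → ℝ) (t x : ℝ) : ℝ :=
  ⨅ γ : {γ : Ω → ℝ // IsStoppingTime (Filtration.natural W hW) (fun ω => (γ ω : WithTop ℝ)) ∧
      ∀ ω, γ ω ∈ Set.Icc 0 t},
    ∫ ω, ({ω' | γ.1 ω' < t}.indicator (fun ω' => g (t - γ.1 ω')) ω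
      + {ω' | γ.1 ω' = t ∧ 0 ≤ x + W t ω'}.indicator 1 ω) ∂P



-- Auxiliary development








lemma barrier_mem_iff {B : Set (ℝ × ℝ)} (hB : IsBarrier B) (t x : ℝ) :
    (t, x) ∈ B ↔ boundary B t ≤ (x : EReal) := by
  constructor
  · intro h
    exact iInf₂_le x h
  · intro h
    set S : Set ℝ := {y : ℝ | (t, y) ∈ B} with hS
    have hSclosed : IsClosed S := hB.1.preimage (Continuous.prodMk_right t)
    by_cases hne : S.Nonempty
    · by_cases hbdd : BddBelow S
      · have hmem : sInf S ∈ S := hSclosed.csInf_mem hne hbdd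
        have h1 : boundary B t = ((sInf S : ℝ) : EReal) := by
          apply le_antisymm
          · exact iInf₂_le (sInf S) hmem
          · refine le_iInf₂ fun y hy => ?_
            exact_mod_cast csInf_le hbdd hy
        rw [h1] at h
        have : sInf S ≤ x := by exact_mod_cast h
        exact hB.2.2 t (sInf S) x hmem this
      · obtain ⟨y, hy, hyx⟩ : ∃ y ∈ S, y < x := by
          by_contra hcon
          push_neg at hcon
          exact hbdd ⟨x, fun y hy => hcon y hy⟩
        exact hB.2.2 t y x hy hyx.le
    · exfalso
      have : boundary B t = ⊤ := by
        rw [boundary]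
        rw [Set.not_nonempty_iff_eq_empty] at hne
        simp [show {y : ℝ | (t, y) ∈ B} = (∅ : Set ℝ) from hne]
      rw [this] at h
      exact (not_le.2 (EReal.coe_lt_top x)) h

/-- no-hit set up to time s -/
def NSet {Ω : Type*} (B : Set (ℝ × ℝ)) (W : ℝ → Ω → ℝ) (s : ℝ) : Set Ω :=
  {ω | ∀ r : ℝ, 0 < r → r ≤ s → (r, W r ω) ∉ B}

lemma lt_tauB_iff {Ω : Type*} {B : Set (ℝ × ℝ)} {W : ℝ → Ω → ℝ}
    (hB : IsBarrier B) (hW : ∀ ω, Continuous fun t => W t ω) {s : ℝ} (hs : 0 < s) (ω : Ω) :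
    (s : EReal) < tauB B W ω ↔ ω ∈ NSet B W s := by
  constructor
  · intro h r hr0 hrs hit
    have : tauB B W ω ≤ (r : EReal) :=
      iInf_le _ (⟨r, hr0, (barrier_mem_iff hB r (W r ω)).1 hit⟩ :
        {r : ℝ // 0 < r ∧ boundary B r ≤ ((W r ω : ℝ) : EReal)})
    have : tauB B W ω ≤ (s : EReal) := this.trans (by exact_mod_cast hrs)
    exact absurd (h.trans_le this) (lt_irrefl _)
  · intro hN
    have hgt : ∀ i : {r : ℝ // 0 < r ∧ boundary B r ≤ ((W r ω : ℝ) : EReal)}, s < i.1 := by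
      intro i
      by_contra hc
      push_neg at hc
      exact hN i.1 i.2.1 hc ((barrier_mem_iff hB i.1 (W i.1 ω)).2 i.2.2)
    have hge : (s : EReal) ≤ tauB B W ω := le_iInf fun i => by exact_mod_cast (hgt i).le
    rcases lt_or_eq_of_le hge with h | h
    · exact h
    · exfalso
      -- tauB = s ; extract sequence of hitting times decreasing to s
      have hseq : ∀ n : ℕ, ∃ r : ℝ, s < r ∧ r < s + 1 / (n + 1) ∧ (r, W r ω) ∈ B := by
        intro n
        have hpos : (0:ℝ) < 1 / ((n:ℝ) + 1) := by positivity
        have hlt : tauB B W ω < ((s + 1 / ((n:ℝ) + 1) : ℝ) : EReal) := by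
          rw [← h]
          exact_mod_cast (by linarith : s < s + 1 / ((n:ℝ)+1))
        rw [tauB, iInf_lt_iff] at hlt
        obtain ⟨i, hi⟩ := hlt
        exact ⟨i.1, hgt i, by exact_mod_cast hi,
          (barrier_mem_iff hB i.1 (W i.1 ω)).2 i.2.2⟩
      choose r hr1 hr2 hr3 using hseq
      have hrt : Tendsto r atTop (nhds s) := by
        have h1 : Tendsto (fun n : ℕ => s + 1 / ((n : ℝ) + 1)) atTop (nhds s) := by
          have := tendsto_one_div_add_atTop_nhds_zero_nat (𝕜 := ℝ)
          simpa using (tendsto_const_nhds (x := s)).add this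
        exact tendsto_of_tendsto_of_tendsto_of_le_of_le tendsto_const_nhds h1
          (fun n => (hr1 n).le) (fun n => (hr2 n).le)
      have hWt : Tendsto (fun n => (r n, W (r n) ω)) atTop (nhds (s, W s ω)) :=
        (hrt.prodMk_nhds (((hW ω).tendsto s).comp hrt))
      have : (s, W s ω) ∈ B := hB.1.mem_of_tendsto hWt (Eventually.of_forall hr3)
      exact hN s hs le_rfl this

lemma NSet_zero {Ω : Type*} (B : Set (ℝ × ℝ)) (W : ℝ → Ω → ℝ) : NSet B W 0 = Set.univ := by
  ext ω; simp only [NSet, Set.mem_setOf_eq, Set.mem_univ, iff_true]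
  intro r hr0 hr hit; linarith




/-- the sigma-algebra F_s -/
def FSig {Ω : Type*} [MeasurableSpace Ω] (W : ℝ → Ω → ℝ) (s : ℝ) : MeasurableSpace Ω :=
  ⨆ u : Set.Icc (0 : ℝ) s, MeasurableSpace.comap (W u) inferInstance

lemma fdist_meas {Ω : Type*} [MeasurableSpace Ω] (W : ℝ → Ω → ℝ) (B : Set (ℝ × ℝ))
    {s r : ℝ} (hr : r ∈ Set.Icc 0 s) :
    Measurable[FSig W s] (fun ω => EMetric.infEdist ((r, W r ω) : ℝ × ℝ) B) := by
  have h1 : Measurable[MeasurableSpace.comap (W r) inferInstance] (W r) :=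
    comap_measurable (W r)
  have h2 : Measurable fun y : ℝ => EMetric.infEdist ((r, y) : ℝ × ℝ) B :=
    (EMetric.continuous_infEdist.comp (Continuous.prodMk_right r)).measurable
  have h3 : Measurable[MeasurableSpace.comap (W r) inferInstance]
      (fun ω => EMetric.infEdist ((r, W r ω) : ℝ × ℝ) B) := h2.comp h1
  exact h3.mono (le_iSup (fun u : Set.Icc (0:ℝ) s => MeasurableSpace.comap (W u) inferInstance)
    ⟨r, hr⟩) le_rfl

lemma NSet_measurable_aux {Ω : Type*} [MeasurableSpace Ω] {B : Set (ℝ × ℝ)}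
    {W : ℝ → Ω → ℝ} (hBc : IsClosed B) (hW : ∀ ω, Continuous fun t => W t ω)
    {a s : ℝ} (ha : 0 < a) (has : a ≤ s) :
    MeasurableSet[FSig W s] {ω | ∃ r ∈ Set.Icc a s, (r, W r ω) ∈ B} := by
  classical
  set f : ℝ → Ω → ℝ≥0∞ := fun r ω => EMetric.infEdist ((r, W r ω) : ℝ × ℝ) B with hf
  set c : ℕ → ℝ := fun m => max a (min s (TopologicalSpace.denseSeq ℝ m)) with hc
  have hcmem : ∀ m, c m ∈ Set.Icc a s := fun m =>
    ⟨le_max_left _ _, max_le has (min_le_left _ _)⟩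
  have hkey : {ω : Ω | ∃ r ∈ Set.Icc a s, (r, W r ω) ∈ B}
      = {ω : Ω | (⨅ m : ℕ, f (c m) ω) = 0} := by
    ext ω
    have hfc : Continuous fun r : ℝ => f r ω := by
      have : Continuous fun r : ℝ => ((r, W r ω) : ℝ × ℝ) :=
        continuous_id.prodMk (hW ω)
      exact EMetric.continuous_infEdist.comp this
    simp only [Set.mem_setOf_eq]
    constructor
    · rintro ⟨r, hrmem, hrB⟩
      have hfr : f r ω = 0 := EMetric.infEdist_zero_of_mem hrB
      -- rationals approaching r
      have hrcl : r ∈ closure (Set.range (TopologicalSpace.denseSeq ℝ)) := by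
        rw [(TopologicalSpace.denseRange_denseSeq ℝ).closure_range]
        trivial
      rw [mem_closure_iff_seq_limit] at hrcl
      obtain ⟨x, hxmem, hxlim⟩ := hrcl
      choose m hm using hxmem
      have hclim : Tendsto (fun j => c (m j)) atTop (nhds r) := by
        have h1 : Tendsto (fun j => max a (min s (x j))) atTop (nhds (max a (min s r))) :=
          Filter.Tendsto.max tendsto_const_nhds (Filter.Tendsto.min tendsto_const_nhds hxlim)
        have heq : max a (min s r) = r := by
          rw [min_eq_right hrmem.2, max_eq_right hrmem.1]
        rw [heq] at h1
        have h2 : (fun j => c (m j)) = fun j => max a (min s (x j)) := by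
          funext j
          simp only [hc]
          rw [hm j]
        rw [h2]
        exact h1
      have hflim : Tendsto (fun j => f (c (m j)) ω) atTop (nhds 0) := by
        rw [← hfr]
        exact (hfc.tendsto r).comp hclim
      have hle : ∀ j, (⨅ m : ℕ, f (c m) ω) ≤ f (c (m j)) ω := fun j => iInf_le _ _
      have : (⨅ m : ℕ, f (c m) ω) ≤ 0 := ge_of_tendsto' hflim hle |>.trans le_rfl
      exact le_antisymm this (zero_le)
    · intro hinf
      obtain ⟨r0, hr0mem, hr0min⟩ :=
        IsCompact.exists_isMinOn isCompact_Icc ⟨a, le_refl a, has⟩ hfc.continuousOn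
      have : f r0 ω ≤ 0 := by
        rw [← hinf]
        exact le_iInf fun m => hr0min (hcmem m)
      have hzero : f r0 ω = 0 := le_antisymm this (zero_le)
      refine ⟨r0, hr0mem, ?_⟩
      exact (EMetric.mem_iff_infEdist_zero_of_closed hBc).2 hzero
  rw [hkey]
  have hmeas : Measurable[FSig W s] fun ω => ⨅ m : ℕ, f (c m) ω :=
    Measurable.iInf fun m => fdist_meas W B (Set.Icc_subset_Icc_left ha.le (hcmem m))
  exact hmeas (measurableSet_singleton 0)

lemma NSet_measurable {Ω : Type*} [MeasurableSpace Ω] {B : Set (ℝ × ℝ)}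
    {W : ℝ → Ω → ℝ} (hBc : IsClosed B) (hW : ∀ ω, Continuous fun t => W t ω)
    {s : ℝ} (hs : 0 ≤ s) : MeasurableSet[FSig W s] (NSet B W s) := by
  rcases eq_or_lt_of_le hs with h | h
  · have : NSet B W s = Set.univ := by
      ext ω; simp only [NSet, Set.mem_setOf_eq, Set.mem_univ, iff_true]
      intro r hr0 hr hit; rw [← h] at hr; linarith
    rw [this]; exact MeasurableSet.univ
  · have hcompl : (NSet B W s)ᶜ = ⋃ n : ℕ, {ω | ∃ r ∈ Set.Icc (s / (n + 2)) s, (r, W r ω) ∈ B} := by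
      ext ω
      simp only [NSet, Set.mem_compl_iff, Set.mem_setOf_eq, Set.mem_iUnion, not_forall]
      constructor
      · rintro ⟨r, hr0, hrs, hrB⟩
        rw [not_not] at hrB
        obtain ⟨n, hn⟩ := exists_nat_ge (s / r)
        refine ⟨n, r, ⟨?_, hrs⟩, hrB⟩
        rw [div_le_iff₀ (by positivity)]
        calc s = (s / r) * r := by field_simp
        _ ≤ (n : ℝ) * r := by nlinarith
        _ ≤ ((n : ℝ) + 2) * r := by nlinarith
        _ = r * ((n : ℝ) + 2) := by ring
      · rintro ⟨n, r, ⟨hr1, hr2⟩, hrB⟩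
        exact ⟨r, lt_of_lt_of_le (by positivity) hr1, hr2, by simp [hrB]⟩
    have : MeasurableSet[FSig W s] (NSet B W s)ᶜ := by
      rw [hcompl]
      exact MeasurableSet.iUnion fun n =>
        NSet_measurable_aux hBc hW (by positivity) (by
          rw [div_le_iff₀ (by positivity)]
          nlinarith)
    simpa using this.compl

lemma FSig_le {Ω : Type*} [MeasurableSpace Ω] {W : ℝ → Ω → ℝ}
    (hW : ∀ t, StronglyMeasurable (W t)) (s : ℝ) : FSig W s ≤ ‹MeasurableSpace Ω› := by
  refine iSup_le fun u => ?_
  rw [MeasurableSpace.comap_le_iff_le_map]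
  intro t ht
  exact (hW u).measurable ht


lemma indicator_one_eq_one_iff {Ω : Type*} (s : Set Ω) (ω : Ω) :
    s.indicator (fun _ => (1:ℝ)) ω = 1 ↔ ω ∈ s := by
  by_cases h : ω ∈ s
  · simp [h]
  · simp [h]

lemma key_lintegral {Ω : Type*} [MeasurableSpace Ω] (P : Measure Ω) [IsProbabilityMeasure P]
    {W : ℝ → Ω → ℝ} (hBM : IsStandardBM P W) {B : Set (ℝ × ℝ)} (hBc : IsClosed B)
    {s t : ℝ} (hs : 0 ≤ s) (hst : s < t) (x : ℝ) :
    P ({ω | W t ω ≤ x} ∩ NSet B W s)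
      = ∫⁻ z, P ({ω | W s ω ≤ x - z} ∩ NSet B W s)
          ∂(gaussianReal 0 (Real.toNNReal (t - s))) := by
  classical
  set Ns := NSet B W s with hNs
  set D : Ω → ℝ := fun ω => W t ω - W s ω with hD
  set V : Ω → ℝ × ℝ := fun ω => (W s ω, Ns.indicator (fun _ => (1:ℝ)) ω) with hV
  have hNs_F : MeasurableSet[FSig W s] Ns := NSet_measurable hBc hBM.cont hs
  have hFle : FSig W s ≤ ‹MeasurableSpace Ω› := FSig_le hBM.meas s
  have hNs_meas : MeasurableSet Ns := hFle _ hNs_F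
  have hWs : Measurable (W s) := (hBM.meas s).measurable
  have hD_meas : Measurable D := (hBM.meas t).measurable.sub hWs
  have hV_meas : Measurable V :=
    hWs.prodMk (measurable_const.indicator hNs_meas)
  have hWs_F : Measurable[FSig W s] (W s) :=
    (comap_measurable (W s)).mono
      (le_iSup (fun u : Set.Icc (0:ℝ) s => MeasurableSpace.comap (W u) inferInstance)
        ⟨s, hs, le_rfl⟩) le_rfl
  have hV_F : Measurable[FSig W s] V :=
    hWs_F.prodMk (measurable_const.indicator hNs_F)
  have hIndep : IndepFun D V P := by
    have h := hBM.indep s t hs hst.le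
    exact indep_of_indep_of_le_right h hV_F.comap_le
  have hmap : P.map (fun ω => (D ω, V ω)) = (P.map D).prod (P.map V) :=
    (indepFun_iff_map_prod_eq_prod_map_map hD_meas.aemeasurable hV_meas.aemeasurable).1 hIndep
  set S : Set (ℝ × ℝ × ℝ) := {p | p.2.1 + p.1 ≤ x ∧ p.2.2 = 1} with hSdef
  have hS : MeasurableSet S := by
    have h1 : MeasurableSet {p : ℝ × ℝ × ℝ | p.2.1 + p.1 ≤ x} :=
      measurableSet_le (measurable_snd.fst.add measurable_fst) measurable_const
    have h2 : MeasurableSet {p : ℝ × ℝ × ℝ | p.2.2 = 1} :=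
      measurable_snd.snd (measurableSet_singleton 1)
    exact h1.inter h2
  have hpre : (fun ω => (D ω, V ω)) ⁻¹' S = {ω | W t ω ≤ x} ∩ Ns := by
    ext ω
    simp only [Set.mem_preimage, hSdef, Set.mem_setOf_eq, Set.mem_inter_iff, hD, hV]
    rw [indicator_one_eq_one_iff]
    constructor
    · rintro ⟨h1, h2⟩; exact ⟨by linarith, h2⟩
    · rintro ⟨h1, h2⟩; exact ⟨by linarith, h2⟩
  have hE_meas : MeasurableSet ({ω | W t ω ≤ x} ∩ Ns) :=
    (measurableSet_le (hBM.meas t).measurable measurable_const).inter hNs_meas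
  haveI : IsProbabilityMeasure (P.map D) := Measure.isProbabilityMeasure_map hD_meas.aemeasurable
  haveI : IsProbabilityMeasure (P.map V) := Measure.isProbabilityMeasure_map hV_meas.aemeasurable
  have hindS : Measurable (S.indicator (fun _ => (1:ℝ≥0∞))) :=
    measurable_const.indicator hS
  have step1 : P ({ω | W t ω ≤ x} ∩ Ns)
      = ∫⁻ p, S.indicator (fun _ => (1:ℝ≥0∞)) p ∂(P.map (fun ω => (D ω, V ω))) := by
    rw [lintegral_map hindS (hD_meas.prodMk hV_meas)]
    have : ∀ ω, S.indicator (fun _ => (1:ℝ≥0∞)) (D ω, V ω)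
        = ((fun ω => (D ω, V ω)) ⁻¹' S).indicator (fun _ => (1:ℝ≥0∞)) ω := by
      intro ω
      simp only [Set.indicator_apply, Set.mem_preimage]
    simp_rw [this, hpre]
    exact (lintegral_indicator_one hE_meas).symm
  have step2 : ∫⁻ p, S.indicator (fun _ => (1:ℝ≥0∞)) p ∂((P.map D).prod (P.map V))
      = ∫⁻ z, P ({ω | W s ω ≤ x - z} ∩ Ns) ∂(P.map D) := by
    rw [lintegral_prod _ hindS.aemeasurable]
    congr 1
    funext z
    have hsl : {v : ℝ × ℝ | (z, v) ∈ S} = {v : ℝ × ℝ | v.1 ≤ x - z ∧ v.2 = 1} := by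
      ext v
      simp only [hSdef, Set.mem_setOf_eq]
      constructor
      · rintro ⟨h1, h2⟩; exact ⟨by linarith, h2⟩
      · rintro ⟨h1, h2⟩; exact ⟨by linarith, h2⟩
    have hslm : MeasurableSet {v : ℝ × ℝ | v.1 ≤ x - z ∧ v.2 = 1} := by
      have h1 : MeasurableSet {v : ℝ × ℝ | v.1 ≤ x - z} :=
        measurableSet_le measurable_fst measurable_const
      have h2 : MeasurableSet {v : ℝ × ℝ | v.2 = 1} :=
        measurable_snd (measurableSet_singleton 1)
      exact h1.inter h2
    have : ∫⁻ v, S.indicator (fun _ => (1:ℝ≥0∞)) (z, v) ∂(P.map V)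
        = (P.map V) {v : ℝ × ℝ | v.1 ≤ x - z ∧ v.2 = 1} := by
      have heq : ∀ v : ℝ × ℝ, S.indicator (fun _ => (1:ℝ≥0∞)) (z, v)
          = ({v : ℝ × ℝ | v.1 ≤ x - z ∧ v.2 = 1}).indicator (fun _ => (1:ℝ≥0∞)) v := by
        intro v
        simp only [Set.indicator_apply]
        have hiff : (z, v) ∈ S ↔ v ∈ {v : ℝ × ℝ | v.1 ≤ x - z ∧ v.2 = 1} := by
          rw [← hsl]; rfl
        by_cases h : (z, v) ∈ S
        · rw [if_pos h, if_pos (hiff.1 h)]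
        · rw [if_neg h, if_neg (fun hc => h (hiff.2 hc))]
      simp_rw [heq]
      exact lintegral_indicator_one hslm
    rw [this, Measure.map_apply hV_meas hslm]
    congr 1
    ext ω
    simp only [hV, Set.mem_preimage, Set.mem_setOf_eq, Set.mem_inter_iff]
    rw [indicator_one_eq_one_iff]
  have hlaw : P.map D = gaussianReal 0 (Real.toNNReal (t - s)) := hBM.incr s t hs hst.le
  rw [step1, hmap, step2, hlaw]

lemma gaussian_symm (v : NNReal) :
    (gaussianReal 0 v).map (fun z : ℝ => -z) = gaussianReal 0 v := by
  have h := gaussianReal_map_const_mul (μ := 0) (v := v) (-1)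
  have h1 : (fun z : ℝ => -z) = ((-1 : ℝ) * ·) := by funext z; ring
  have h2 : NNReal.mk ((-1:ℝ)^2) (sq_nonneg _) = 1 := by ext; norm_num
  rw [h1, h]
  rw [h2]
  norm_num

lemma key_integral {Ω : Type*} [MeasurableSpace Ω] (P : Measure Ω) [IsProbabilityMeasure P]
    {W : ℝ → Ω → ℝ} (hBM : IsStandardBM P W) {B : Set (ℝ × ℝ)} (hBc : IsClosed B)
    {s t : ℝ} (hs : 0 ≤ s) (hst : s < t) (x : ℝ) :
    (P ({ω | W t ω ≤ x} ∩ NSet B W s)).toReal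
      = ∫ ω, (P ({ω' | W s ω' ≤ x + W (t - s) ω} ∩ NSet B W s)).toReal ∂P := by
  classical
  set F : ℝ → ℝ≥0∞ := fun y => P ({ω | W s ω ≤ y} ∩ NSet B W s) with hF
  have hFmono : Monotone F := by
    intro y1 y2 h
    exact measure_mono (Set.inter_subset_inter_left _ (fun ω hω => le_trans hω h))
  have hFne : ∀ y, F y ≠ ⊤ := fun y => measure_ne_top P _
  set G := gaussianReal 0 (Real.toNNReal (t - s)) with hG
  have hlaw : P.map (W (t - s)) = G := by
    have h0 := hBM.incr 0 (t - s) le_rfl (by linarith)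
    have hae : (fun ω => W (t - s) ω - W 0 ω) =ᵐ[P] W (t - s) := by
      filter_upwards [hBM.init] with ω h
      rw [h, sub_zero]
    rw [← Measure.map_congr hae] at *
    rw [h0]
    norm_num
    rfl
  have hφmono : Monotone fun y : ℝ => (F (x + y)).toReal := by
    intro y1 y2 h
    exact ENNReal.toReal_mono (hFne _) (hFmono (by linarith))
  have hφmeas : Measurable fun y : ℝ => (F (x + y)).toReal := hφmono.measurable
  have step1 : ∫ ω, (F (x + W (t - s) ω)).toReal ∂P
      = ∫ y, (F (x + y)).toReal ∂(P.map (W (t - s))) :=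
    (integral_map (hBM.meas (t - s)).measurable.aemeasurable
      hφmeas.stronglyMeasurable.aestronglyMeasurable).symm
  have hGsymm : G.map (fun z : ℝ => -z) = G := gaussian_symm _
  have step2 : ∫ y, (F (x + y)).toReal ∂G = ∫ z, (F (x + -z)).toReal ∂G := by
    conv_lhs => rw [← hGsymm]
    rw [integral_map measurable_neg.aemeasurable
      hφmeas.stronglyMeasurable.aestronglyMeasurable]
  have hanti : Antitone fun z : ℝ => F (x - z) := by
    intro z1 z2 h
    exact hFmono (by linarith)
  have step3 : ∫ z, (F (x - z)).toReal ∂G = (∫⁻ z, F (x - z) ∂G).toReal := by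
    apply integral_toReal
    · exact hanti.measurable.aemeasurable
    · exact Filter.Eventually.of_forall fun z => measure_lt_top P _
  have hkey := key_lintegral P hBM hBc hs hst x
  calc (P ({ω | W t ω ≤ x} ∩ NSet B W s)).toReal
      = (∫⁻ z, F (x - z) ∂G).toReal := by rw [hkey]
    _ = ∫ z, (F (x - z)).toReal ∂G := step3.symm
    _ = ∫ z, (F (x + -z)).toReal ∂G := by simp_rw [sub_eq_add_neg]
    _ = ∫ y, (F (x + y)).toReal ∂G := step2.symm
    _ = ∫ y, (F (x + y)).toReal ∂(P.map (W (t - s))) := by rw [hlaw]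
    _ = ∫ ω, (F (x + W (t - s) ω)).toReal ∂P := step1.symm

lemma subset_ae_eq {Ω : Type*} [MeasurableSpace Ω] {P : Measure Ω} [IsProbabilityMeasure P]
    {A C : Set Ω} (hAC : A ⊆ C) (hA : MeasurableSet A) (hm : P C ≤ P A) : C =ᵐ[P] A := by
  have heq : P C = P A := le_antisymm hm (measure_mono hAC)
  have hdiff : P (C \ A) = 0 := by
    rw [measure_diff hAC hA.nullMeasurableSet (measure_ne_top P A), heq, tsub_self]
  rw [MeasureTheory.ae_eq_set]
  constructor
  · exact hdiff
  · rw [Set.diff_eq_empty.2 hAC]; exact measure_empty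

/-- The open-interval no-hit set. -/
def MSet {Ω : Type*} (B : Set (ℝ × ℝ)) (W : ℝ → Ω → ℝ) (t : ℝ) : Set Ω :=
  {ω | ∀ r : ℝ, 0 < r → r < t → (r, W r ω) ∉ B}

lemma NSet_eq_MSet_inter {Ω : Type*} (B : Set (ℝ × ℝ)) (W : ℝ → Ω → ℝ) {t : ℝ} (ht : 0 < t) :
    NSet B W t = MSet B W t ∩ {ω | (t, W t ω) ∉ B} := by
  ext ω
  simp only [NSet, MSet, Set.mem_setOf_eq, Set.mem_inter_iff]
  constructor
  · intro h
    exact ⟨fun r h1 h2 => h r h1 h2.le, h t ht le_rfl⟩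
  · rintro ⟨h1, h2⟩ r hr0 hrt
    rcases lt_or_eq_of_le hrt with h | h
    · exact h1 r hr0 h
    · rw [h]; exact h2

lemma MSet_subset_NSet {Ω : Type*} (B : Set (ℝ × ℝ)) (W : ℝ → Ω → ℝ) {s t : ℝ} (hst : s < t) :
    MSet B W t ⊆ NSet B W s := fun ω hω r hr0 hrs => hω r hr0 (lt_of_le_of_lt hrs hst)

lemma MSet_eq_iInter {Ω : Type*} (B : Set (ℝ × ℝ)) (W : ℝ → Ω → ℝ) {s t : ℝ}
    (hs : 0 ≤ s) (hst : s < t) :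
    MSet B W t = ⋂ n : ℕ, NSet B W (t - (t - s) / (n + 2)) := by
  ext ω
  simp only [MSet, NSet, Set.mem_setOf_eq, Set.mem_iInter]
  constructor
  · intro h n r hr0 hrn
    refine h r hr0 (lt_of_le_of_lt hrn ?_)
    have : (0:ℝ) < (t - s) / (n + 2) := div_pos (by linarith) (by positivity)
    linarith
  · intro h r hr0 hrt hrB
    obtain ⟨n, hn⟩ := exists_nat_ge ((t - s) / (t - r))
    refine h n r hr0 ?_ hrB
    have htr : (0:ℝ) < t - r := by linarith
    have h1 : (t - s) / ((n:ℝ) + 2) ≤ t - r := by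
      rw [div_le_iff₀ (by positivity)]
      have h2 : t - s ≤ (t - r) * ((n:ℝ)) := by
        rw [div_le_iff₀ htr] at hn
        nlinarith
      nlinarith
    linarith

lemma zero_lt_tauB_iff {Ω : Type*} {B : Set (ℝ × ℝ)} {W : ℝ → Ω → ℝ}
    (hB : IsBarrier B) (hW : ∀ ω, Continuous fun t => W t ω) (ω : Ω) :
    (0 : EReal) < tauB B W ω ↔ ∃ n : ℕ, ω ∈ NSet B W (1 / (n + 1)) := by
  constructor
  · intro h
    obtain ⟨y, h0y, hyτ⟩ := EReal.lt_iff_exists_real_btwn.1 h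
    have h0y' : (0:ℝ) < y := by exact_mod_cast h0y
    obtain ⟨n, hn⟩ := exists_nat_one_div_lt h0y'
    have hpos : (0:ℝ) < 1 / ((n:ℝ) + 1) := by positivity
    have hlt : ((1 / ((n:ℝ) + 1) : ℝ) : EReal) < tauB B W ω :=
      lt_trans (by exact_mod_cast hn) hyτ
    exact ⟨n, (lt_tauB_iff hB hW hpos ω).1 hlt⟩
  · rintro ⟨n, hn⟩
    have hpos : (0:ℝ) < 1 / ((n:ℝ) + 1) := by positivity
    have := (lt_tauB_iff hB hW hpos ω).2 hn
    exact lt_trans (by exact_mod_cast hpos) this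

lemma TSet_measurable {Ω : Type*} [MeasurableSpace Ω] {B : Set (ℝ × ℝ)} {W : ℝ → Ω → ℝ}
    (hB : IsBarrier B) (hWm : ∀ t, StronglyMeasurable (W t))
    (hW : ∀ ω, Continuous fun t => W t ω) {s : ℝ} (hs : 0 ≤ s) :
    MeasurableSet {ω | (s : EReal) < tauB B W ω} := by
  rcases eq_or_lt_of_le hs with h | h
  · have : {ω | (s : EReal) < tauB B W ω} = ⋃ n : ℕ, NSet B W (1 / ((n:ℝ) + 1)) := by
      ext ω
      simp only [Set.mem_setOf_eq, Set.mem_iUnion, ← h]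
      rw [show ((0:ℝ):EReal) = (0:EReal) by norm_cast]
      exact zero_lt_tauB_iff hB hW ω
    rw [this]
    exact MeasurableSet.iUnion fun n =>
      FSig_le hWm _ _ (NSet_measurable hB.1 hW (by positivity))
  · have : {ω | (s : EReal) < tauB B W ω} = NSet B W s := by
      ext ω; exact lt_tauB_iff hB hW h ω
    rw [this]
    exact FSig_le hWm _ _ (NSet_measurable hB.1 hW hs)

/-- Theorem (inductive scheme for the discrete inverse first-passage problem):
if `g` is piecewise constant with division points `0 = t_0 < t_1 < ⋯ < t_N < ∞` and the
standard barrier `B` solves the inverse first-passage problem for `g`, then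
`u(t,x) = P(W_t ≤ x, τ_B > t)` satisfies the inductive scheme. -/
theorem discrete_forward_scheme
    {Ω : Type*} [MeasurableSpace Ω] (P : Measure Ω) [IsProbabilityMeasure P]
    (W : ℝ → Ω → ℝ) (hBM : IsStandardBM P W)
    (g : ℝ → ℝ) (hg : IsSurvival g)
    (N : ℕ) (ts : ℕ → ℝ) (hts0 : ts 0 = 0)
    (htsmono : ∀ k : ℕ, k < N → ts k < ts (k + 1))
    (hconst : ∀ k : ℕ, k < N → ∀ s : ℝ, ts k ≤ s → s < ts (k + 1) → g s = g (ts k))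
    (hlast : ∀ s : ℝ, ts N ≤ s → g s = g (ts N))
    (B : Set (ℝ × ℝ)) (hB : IsStandardBarrier B)
    (hsol : ∀ t : ℝ, 0 ≤ t → survival P B W t = g t) :
    (∀ x : ℝ, uFun P B W 0 x = if 0 ≤ x then 1 else 0) ∧
    (∀ k : ℕ, k ≤ N → ∀ t : ℝ, ts k < t → (k < N → t < ts (k + 1)) → ∀ x : ℝ,
      uFun P B W t x = ∫ ω, uFun P B W (ts k) (x + W (t - ts k) ω) ∂P) ∧
    (∀ k : ℕ, k < N → ∀ x : ℝ,
      uFun P B W (ts (k + 1)) x =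
        min (∫ ω, uFun P B W (ts k) (x + W (ts (k + 1) - ts k) ω) ∂P)
          (g (ts (k + 1)))) := by
  classical
  obtain ⟨hBar, hb0, _hbbot⟩ := hB
  have hcont := hBM.cont
  have hmeas := hBM.meas
  have hts_nonneg : ∀ k : ℕ, k ≤ N → 0 ≤ ts k := by
    intro k hk
    induction k with
    | zero => rw [hts0]
    | succ n ih =>
      have hn : n < N := lt_of_lt_of_le (Nat.lt_succ_self n) hk
      have h1 := htsmono n hn
      have h2 := ih hn.le
      linarith
  -- basic tail facts
  have hT0 : P {ω | ((0:ℝ) : EReal) < tauB B W ω} = 1 := by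
    have h1 : (P {ω | ((0:ℝ) : EReal) < tauB B W ω}).toReal = 1 := by
      have h := hsol 0 le_rfl
      rw [hg.init] at h
      exact h
    exact (ENNReal.toReal_eq_one_iff _).1 h1
  have hTmeas : ∀ s : ℝ, 0 ≤ s → MeasurableSet {ω | (s : EReal) < tauB B W ω} :=
    fun s hs => TSet_measurable hBar hmeas hcont hs
  have hTN : ∀ s : ℝ, 0 ≤ s →
      ({ω | (s : EReal) < tauB B W ω} : Set Ω) =ᵐ[P] NSet B W s := by
    intro s hs
    rcases eq_or_lt_of_le hs with h | h
    · subst h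
      rw [NSet_zero]
      rw [MeasureTheory.ae_eq_univ]
      have hc := measure_compl (hTmeas 0 le_rfl) (measure_ne_top P _)
      rw [hT0, measure_univ, tsub_self] at hc
      exact hc
    · have : ({ω | (s : EReal) < tauB B W ω} : Set Ω) = NSet B W s := by
        ext ω; exact lt_tauB_iff hBar hcont h ω
      rw [this]
      exact Filter.EventuallyEq.rfl
  have hNmeas : ∀ s : ℝ, 0 ≤ s → MeasurableSet (NSet B W s) :=
    fun s hs => FSig_le hmeas s _ (NSet_measurable hBar.1 hcont hs)
  have hPN : ∀ s : ℝ, 0 ≤ s → P (NSet B W s) = P {ω | (s : EReal) < tauB B W ω} :=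
    fun s hs => (measure_congr (hTN s hs)).symm
  have huFun_N : ∀ s : ℝ, 0 ≤ s → ∀ y : ℝ,
      uFun P B W s y = (P ({ω | W s ω ≤ y} ∩ NSet B W s)).toReal := by
    intro s hs y
    show (P ({ω | W s ω ≤ y} ∩ {ω | (s : EReal) < tauB B W ω})).toReal = _
    exact congrArg ENNReal.toReal
      (measure_congr (Filter.EventuallyEq.inter (Filter.EventuallyEq.refl _ _) (hTN s hs)))
  have hTsub : ∀ s t : ℝ, s ≤ t →
      {ω | (t : EReal) < tauB B W ω} ⊆ {ω | (s : EReal) < tauB B W ω} := by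
    intro s t hst ω hω
    exact lt_of_le_of_lt (EReal.coe_le_coe_iff.2 hst) hω
  -- the generic transition step
  have hstep : ∀ s t : ℝ, 0 ≤ s → s < t → g t = g s → ∀ x : ℝ,
      uFun P B W t x = ∫ ω, uFun P B W s (x + W (t - s) ω) ∂P := by
    intro s t hs hst hgts x
    have ht0 : 0 ≤ t := hs.trans hst.le
    have heqP : P {ω | (s : EReal) < tauB B W ω} = P {ω | (t : EReal) < tauB B W ω} := by
      refine (ENNReal.toReal_eq_toReal_iff' (measure_ne_top _ _) (measure_ne_top _ _)).1 ?_
      have h1 := hsol s hs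
      have h2 := hsol t ht0
      rw [show survival P B W s = (P {ω | (s : EReal) < tauB B W ω}).toReal from rfl] at h1
      rw [show survival P B W t = (P {ω | (t : EReal) < tauB B W ω}).toReal from rfl] at h2
      rw [h1, h2, hgts]
    have haeT : ({ω | (t : EReal) < tauB B W ω} : Set Ω) =ᵐ[P] NSet B W s := by
      refine Filter.EventuallyEq.trans ?_ (hTN s hs)
      exact (subset_ae_eq (hTsub s t hst.le) (hTmeas t ht0) heqP.le).symm
    have hu : uFun P B W t x = (P ({ω | W t ω ≤ x} ∩ NSet B W s)).toReal := by
      show (P ({ω | W t ω ≤ x} ∩ {ω | (t : EReal) < tauB B W ω})).toReal = _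
      exact congrArg ENNReal.toReal
        (measure_congr (Filter.EventuallyEq.inter (Filter.EventuallyEq.refl _ _) haeT))
    rw [hu, key_integral P hBM hBar.1 hs hst x]
    simp_rw [huFun_N s hs]
  refine ⟨?_, ?_, ?_⟩
  · -- initial condition
    intro x
    have haemem : ∀ᵐ ω ∂P, ((0:ℝ) : EReal) < tauB B W ω := by
      have hc := measure_compl (hTmeas 0 le_rfl) (measure_ne_top P _)
      rw [hT0, measure_univ, tsub_self] at hc
      exact hc
    by_cases hx : 0 ≤ x
    · rw [if_pos hx]
      have hae : ({ω | W 0 ω ≤ x ∧ ((0:ℝ) : EReal) < tauB B W ω} : Set Ω)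
          =ᵐ[P] (Set.univ : Set Ω) := by
        rw [Filter.eventuallyEq_set]
        filter_upwards [hBM.init, haemem] with ω h0 hτ
        simp only [Set.mem_setOf_eq, Set.mem_univ, iff_true]
        exact ⟨by rw [h0]; exact hx, hτ⟩
      show (P {ω | W 0 ω ≤ x ∧ ((0:ℝ) : EReal) < tauB B W ω}).toReal = 1
      rw [measure_congr hae, measure_univ, ENNReal.toReal_one]
    · rw [if_neg hx]
      have hae : ({ω | W 0 ω ≤ x ∧ ((0:ℝ) : EReal) < tauB B W ω} : Set Ω)
          =ᵐ[P] (∅ : Set Ω) := by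
        rw [Filter.eventuallyEq_set]
        filter_upwards [hBM.init] with ω h0
        simp only [Set.mem_setOf_eq, Set.mem_empty_iff_false, iff_false]
        rintro ⟨h1, _⟩
        rw [h0] at h1
        exact hx h1
      show (P {ω | W 0 ω ≤ x ∧ ((0:ℝ) : EReal) < tauB B W ω}).toReal = 0
      rw [measure_congr hae, measure_empty, ENNReal.toReal_zero]
  · -- interior of the intervals
    intro k hk t ht hlt x
    have hs : 0 ≤ ts k := hts_nonneg k hk
    have hgt : g t = g (ts k) := by
      by_cases hkN : k < N
      · exact hconst k hkN t ht.le (hlt hkN)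
      · have hkeq : k = N := le_antisymm hk (not_lt.1 hkN)
        subst hkeq
        exact hlast t ht.le
    exact hstep (ts k) t hs ht hgt x
  · -- jump times
    intro k hkN x
    have hs : 0 ≤ ts k := hts_nonneg k hkN.le
    have hst : ts k < ts (k + 1) := htsmono k hkN
    have ht : 0 < ts (k + 1) := lt_of_le_of_lt hs hst
    set s := ts k with hsdef
    set t := ts (k + 1) with htdef
    have ht0 : 0 ≤ t := ht.le
    have hRHS : ∫ ω, uFun P B W s (x + W (t - s) ω) ∂P
        = (P ({ω | W t ω ≤ x} ∩ NSet B W s)).toReal := by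
      simp_rw [huFun_N s hs]
      exact (key_integral P hBM hBar.1 hs hst x).symm
    have hNt : ({ω | (t : EReal) < tauB B W ω} : Set Ω) = NSet B W t := by
      ext ω; exact lt_tauB_iff hBar hcont ht ω
    -- a.e. equality of NSet s and MSet t
    have hMmeas : MeasurableSet (MSet B W t) := by
      rw [MSet_eq_iInter B W hs hst]
      exact MeasurableSet.iInter fun n => hNmeas _ (by
        have h1 : (0:ℝ) < (t - s) / ((n:ℝ) + 2) := div_pos (by linarith) (by positivity)
        have h2 : (t - s) / ((n:ℝ) + 2) ≤ t - s := by
          rw [div_le_iff₀ (by positivity)]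
          nlinarith
        linarith)
    have hMN : NSet B W s =ᵐ[P] MSet B W t := by
      have hsub2 : MSet B W t ⊆ NSet B W s := MSet_subset_NSet B W hst
      have hnull : P (NSet B W s \ MSet B W t) = 0 := by
        have hcover : NSet B W s \ MSet B W t
            ⊆ ⋃ n : ℕ, (NSet B W s \ NSet B W (t - (t - s) / ((n:ℝ) + 2))) := by
          intro ω hω
          rw [MSet_eq_iInter B W hs hst] at hω
          obtain ⟨h1, h2⟩ := hω
          rw [Set.mem_iInter] at h2
          push_neg at h2
          obtain ⟨n, hn⟩ := h2
          exact Set.mem_iUnion.2 ⟨n, h1, hn⟩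
        refine measure_mono_null hcover (measure_iUnion_null fun n => ?_)
        set sn := t - (t - s) / ((n:ℝ) + 2) with hsndef
        have hd1 : (0:ℝ) < (t - s) / ((n:ℝ) + 2) := div_pos (by linarith) (by positivity)
        have hd2 : (t - s) / ((n:ℝ) + 2) < t - s := by
          rw [div_lt_iff₀ (by positivity)]
          nlinarith
        have hsn1 : s < sn := by rw [hsndef]; linarith
        have hsn2 : sn < t := by rw [hsndef]; linarith
        have hsn0 : 0 < sn := lt_of_le_of_lt hs hsn1
        have hNsub : NSet B W sn ⊆ NSet B W s :=
          fun ω hω r hr0 hrs => hω r hr0 (hrs.trans hsn1.le)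
        have heqP : P (NSet B W s) = P (NSet B W sn) := by
          rw [hPN s hs, hPN sn hsn0.le]
          refine (ENNReal.toReal_eq_toReal_iff' (measure_ne_top _ _) (measure_ne_top _ _)).1 ?_
          have h1 := hsol s hs
          have h2 := hsol sn hsn0.le
          rw [show survival P B W s = (P {ω | (s : EReal) < tauB B W ω}).toReal from rfl] at h1
          rw [show survival P B W sn = (P {ω | (sn : EReal) < tauB B W ω}).toReal from rfl] at h2
          rw [h1, h2, hconst k hkN sn hsn1.le hsn2]
        rw [measure_diff hNsub (hNmeas sn hsn0.le).nullMeasurableSet (measure_ne_top P _),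
          heqP, tsub_self]
      rw [MeasureTheory.ae_eq_set]
      exact ⟨hnull, by rw [Set.diff_eq_empty.2 hsub2]; exact measure_empty⟩
    by_cases hc : (x : EReal) < boundary B t
    · -- absorbed case: min is the integral
      have hseteq : {ω | W t ω ≤ x} ∩ NSet B W t = {ω | W t ω ≤ x} ∩ MSet B W t := by
        ext ω
        constructor
        · rintro ⟨h1, h2⟩
          exact ⟨h1, ((NSet_eq_MSet_inter B W ht ▸ h2 : ω ∈ MSet B W t ∩ _)).1⟩
        · rintro ⟨h1, h2⟩
          refine ⟨h1, ?_⟩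
          rw [NSet_eq_MSet_inter B W ht]
          refine ⟨h2, fun hmem => ?_⟩
          have hble := (barrier_mem_iff hBar t (W t ω)).1 hmem
          have hWx : ((W t ω : ℝ) : EReal) ≤ (x : EReal) := EReal.coe_le_coe_iff.2 h1
          exact absurd (lt_of_le_of_lt (hble.trans hWx) hc) (lt_irrefl _)
      have hu : uFun P B W t x = (P ({ω | W t ω ≤ x} ∩ NSet B W s)).toReal := by
        show (P ({ω | W t ω ≤ x} ∩ {ω | (t : EReal) < tauB B W ω})).toReal = _
        rw [hNt, hseteq]
        exact congrArg ENNReal.toReal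
          (measure_congr (Filter.EventuallyEq.inter (Filter.EventuallyEq.refl _ _) hMN.symm))
      have hle : (P ({ω | W t ω ≤ x} ∩ NSet B W s)).toReal ≤ g t := by
        rw [← hu]
        have h1 : uFun P B W t x ≤ (P {ω | (t : EReal) < tauB B W ω}).toReal := by
          refine ENNReal.toReal_mono (measure_ne_top _ _) (measure_mono ?_)
          exact fun ω hω => hω.2
        have h2 := hsol t ht0
        rw [show survival P B W t = (P {ω | (t : EReal) < tauB B W ω}).toReal from rfl] at h2
        rw [← h2]
        exact h1
      rw [hRHS, min_eq_left hle, hu]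
    · -- saturated case: min is g
      push_neg at hc
      have hsub : NSet B W t ⊆ {ω | W t ω ≤ x} := by
        intro ω hω
        have hnot : (t, W t ω) ∉ B := hω t ht le_rfl
        have hlt : ((W t ω : ℝ) : EReal) < boundary B t := by
          by_contra hcon
          push_neg at hcon
          exact hnot ((barrier_mem_iff hBar t (W t ω)).2 hcon)
        have := lt_of_lt_of_le hlt hc
        exact (EReal.coe_lt_coe_iff.1 this).le
      have hu : uFun P B W t x = g t := by
        have hseteq : {ω | W t ω ≤ x} ∩ {ω | (t : EReal) < tauB B W ω}
            = {ω | (t : EReal) < tauB B W ω} := by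
          rw [hNt]
          exact Set.inter_eq_right.2 hsub
        show (P ({ω | W t ω ≤ x} ∩ {ω | (t : EReal) < tauB B W ω})).toReal = g t
        rw [hseteq]
        exact hsol t ht0
      have hge : g t ≤ ∫ ω, uFun P B W s (x + W (t - s) ω) ∂P := by
        rw [hRHS]
        have h2 := hsol t ht0
        rw [show survival P B W t = (P {ω | (t : EReal) < tauB B W ω}).toReal from rfl] at h2
        rw [← h2, hNt]
        refine ENNReal.toReal_mono (measure_ne_top _ _) (measure_mono ?_)
        intro ω hω
        refine ⟨hsub hω, ?_⟩
        exact fun r hr0 hrs => hω r hr0 (hrs.trans hst.le)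
      rw [hu, min_eq_right hge]


end
end

section
/- Let g be a piecewise constant survival distribution function with division points 0 = t_0 < t_1 < ⋯ < t_N < t_{N+1} = ∞, fix t ≥ 0 and x ∈ ℝ, and let T̄[0,t] denote the set of stopping times of W taking values in {t − t_k : k ≥ 0} ∩ [0,t]. Then the optimal stopping value is not changed by restricting to T̄[0,t]: v(t,x) = inf_{γ ∈ T̄[0,t]} E[g(t−γ)·1{γ < t} + 1{γ = t, x + W_t ≥ 0}]. -/
open MeasureTheory ProbabilityTheory Filter Set

noncomputable section

/-- For piecewise constant `g`, restricting the optimal stopping problem to stopping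
times with values in `{t - t_k : k ≥ 0} ∩ [0,t]` does not change the value. -/
theorem discrete_stopping_times_suffice
    {Ω : Type*} [MeasurableSpace Ω] (P : Measure Ω) [IsProbabilityMeasure P]
    (W : ℝ → Ω → ℝ) (hBM : IsStandardBM P W)
    (g : ℝ → ℝ) (hg : IsSurvival g)
    (N : ℕ) (ts : ℕ → ℝ) (hts0 : ts 0 = 0)
    (htsmono : ∀ k : ℕ, k < N → ts k < ts (k + 1))
    (hconst : ∀ k : ℕ, k < N → ∀ s : ℝ, ts k ≤ s → s < ts (k + 1) → g s = g (ts k))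
    (hlast : ∀ s : ℝ, ts N ≤ s → g s = g (ts N))
    (t x : ℝ) (ht : 0 ≤ t) :
    stopValue P W hBM.meas g t x =
      ⨅ γ : {γ : Ω → ℝ // IsStoppingTime (Filtration.natural W hBM.meas) (fun ω => (γ ω : WithTop ℝ)) ∧
          ∀ ω, (∃ k : ℕ, k ≤ N ∧ γ ω = t - ts k) ∧ γ ω ∈ Set.Icc 0 t},
        ∫ ω, ({ω' | γ.1 ω' < t}.indicator (fun ω' => g (t - γ.1 ω')) ω
          + {ω' | γ.1 ω' = t ∧ 0 ≤ x + W t ω'}.indicator 1 ω) ∂P := by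
  classical
  set F := Filtration.natural W hBM.meas with hF
  -- monotonicity of ts on [0, N]
  have tsmono : ∀ i j : ℕ, i ≤ j → j ≤ N → ts i ≤ ts j := by
    intro i j hij hjN
    induction j with
    | zero => simp_all
    | succ j ih =>
      rcases Nat.lt_or_ge i (j + 1) with h | h
      · exact le_trans (ih (by omega) (by omega))
          (le_of_lt (htsmono j (by omega)))
      · have : i = j + 1 := le_antisymm hij h
        simp [this]
  have tsnonneg : ∀ k : ℕ, k ≤ N → 0 ≤ ts k := by
    intro k hk; have := tsmono 0 k (Nat.zero_le _) hk; linarith [this, hts0.ge]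
  have tspos : ∀ k : ℕ, k ≤ N → ts k ≤ 0 → k = 0 := by
    intro k hk hts
    by_contra h
    have h1 : 1 ≤ k := Nat.one_le_iff_ne_zero.2 h
    have hN : 1 ≤ N := le_trans h1 hk
    have : ts 0 < ts 1 := htsmono 0 (by omega)
    have : ts 1 ≤ ts k := tsmono 1 k h1 hk
    linarith [hts0]
  -- the index function
  set K : ℝ → ℕ := fun s => sSup {k | k ≤ N ∧ ts k ≤ s} with hK
  have Kbdd : ∀ s : ℝ, BddAbove {k | k ≤ N ∧ ts k ≤ s} :=
    fun s => ⟨N, fun k hk => hk.1⟩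
  have Kmem : ∀ s : ℝ, 0 ≤ s → K s ≤ N ∧ ts (K s) ≤ s := by
    intro s hs
    have h0 : (0 : ℕ) ∈ {k | k ≤ N ∧ ts k ≤ s} := ⟨Nat.zero_le _, by simp [hts0, hs]⟩
    exact Nat.sSup_mem ⟨0, h0⟩ (Kbdd s)
  have Kle : ∀ s : ℝ, ∀ k : ℕ, k ≤ N → ts k ≤ s → k ≤ K s :=
    fun s k hk hts => le_csSup (Kbdd s) ⟨hk, hts⟩
  -- g is determined by the index
  have hgK : ∀ s : ℝ, 0 ≤ s → g s = g (ts (K s)) := by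
    intro s hs
    obtain ⟨hKN, hKs⟩ := Kmem s hs
    rcases eq_or_lt_of_le hKN with heq | hlt
    · rw [heq] at hKs ⊢; exact hlast s hKs
    · have hnot : s < ts (K s + 1) := by
        by_contra h
        push_neg at h
        have := Kle s (K s + 1) hlt h
        omega
      exact hconst (K s) hlt s hKs hnot
  -- measurability of stopping times
  have hmeasγ : ∀ γ : Ω → ℝ, IsStoppingTime F (fun ω => (γ ω : WithTop ℝ)) → Measurable γ := by
    intro γ hγ
    exact measurable_of_Iic fun u => (F.le u) _ (by have := hγ u; simp only [WithTop.coe_le_coe] at this; exact this)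
  -- integrability and non-negativity of the payoff
  have hmeasPay : ∀ γ : Ω → ℝ, Measurable γ → (∀ ω, γ ω ∈ Set.Icc 0 t) →
      Measurable (fun ω => ({ω' | γ ω' < t}.indicator (fun ω' => g (t - γ ω')) ω
        + {ω' | γ ω' = t ∧ 0 ≤ x + W t ω'}.indicator 1 ω)) := by
    intro γ hγm hγb
    have hA : MeasurableSet {ω | γ ω < t} := measurableSet_lt hγm measurable_const
    have hB : MeasurableSet {ω | γ ω = t ∧ 0 ≤ x + W t ω} := by
      have h1 : MeasurableSet {ω | γ ω = t} := hγm (measurableSet_singleton t)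
      have h2 : MeasurableSet {ω | 0 ≤ x + W t ω} :=
        measurableSet_le measurable_const (measurable_const.add (hBM.meas t).measurable)
      exact h1.inter h2
    have hganti : Antitone (fun s : ℝ => g (max s 0)) := by
      intro a b hab
      exact hg.mono (le_max_right a 0) (le_max_right b 0) (max_le_max hab le_rfl)
    have heq : (fun ω => g (t - γ ω)) = fun ω => g (max (t - γ ω) 0) := by
      funext ω
      rw [max_eq_left (sub_nonneg.2 (hγb ω).2)]
    have hm1 : Measurable (fun ω => g (t - γ ω)) := by
      rw [heq]
      exact hganti.measurable.comp (measurable_const.sub hγm)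
    exact (hm1.indicator hA).add (measurable_const.indicator hB)
  have hboundPay : ∀ γ : Ω → ℝ, (∀ ω, γ ω ∈ Set.Icc 0 t) → ∀ ω,
      (0 ≤ ({ω' | γ ω' < t}.indicator (fun ω' => g (t - γ ω')) ω
        + {ω' | γ ω' = t ∧ 0 ≤ x + W t ω'}.indicator 1 ω)) ∧
      (({ω' | γ ω' < t}.indicator (fun ω' => g (t - γ ω')) ω
        + {ω' | γ ω' = t ∧ 0 ≤ x + W t ω'}.indicator 1 ω) ≤ 2) := by
    intro γ hγb ω
    have h1 : 0 ≤ {ω' | γ ω' < t}.indicator (fun ω' => g (t - γ ω')) ω ∧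
        {ω' | γ ω' < t}.indicator (fun ω' => g (t - γ ω')) ω ≤ 1 := by
      by_cases h : ω ∈ {ω' | γ ω' < t}
      · rw [Set.indicator_of_mem h]
        have := hg.mem (t - γ ω) (sub_nonneg.2 (hγb ω).2)
        exact ⟨this.1, this.2⟩
      · rw [Set.indicator_of_notMem h]; norm_num
    have h2 : 0 ≤ {ω' | γ ω' = t ∧ 0 ≤ x + W t ω'}.indicator (1 : Ω → ℝ) ω ∧
        {ω' | γ ω' = t ∧ 0 ≤ x + W t ω'}.indicator (1 : Ω → ℝ) ω ≤ 1 := by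
      by_cases h : ω ∈ {ω' | γ ω' = t ∧ 0 ≤ x + W t ω'}
      · rw [Set.indicator_of_mem h]; norm_num
      · rw [Set.indicator_of_notMem h]; norm_num
    constructor
    · linarith [h1.1, h2.1]
    · linarith [h1.2, h2.2]
  have hintPay : ∀ γ : Ω → ℝ, Measurable γ → (∀ ω, γ ω ∈ Set.Icc 0 t) →
      Integrable (fun ω => ({ω' | γ ω' < t}.indicator (fun ω' => g (t - γ ω')) ω
        + {ω' | γ ω' = t ∧ 0 ≤ x + W t ω'}.indicator 1 ω)) P := by
    intro γ hγm hγb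
    refine (integrable_const (2 : ℝ)).mono'
      (hmeasPay γ hγm hγb).aestronglyMeasurable (ae_of_all _ fun ω => ?_)
    rw [Real.norm_eq_abs, abs_le]
    exact ⟨by linarith [(hboundPay γ hγb ω).1], (hboundPay γ hγb ω).2⟩
  have hnonnegPay : ∀ γ : Ω → ℝ, (∀ ω, γ ω ∈ Set.Icc 0 t) →
      0 ≤ ∫ ω, ({ω' | γ ω' < t}.indicator (fun ω' => g (t - γ ω')) ω
        + {ω' | γ ω' = t ∧ 0 ≤ x + W t ω'}.indicator 1 ω) ∂P := by
    intro γ hγb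
    exact integral_nonneg fun ω => (hboundPay γ hγb ω).1
  -- nonemptiness of both index types
  have hmemconst : ∀ ω : Ω, ((fun _ : Ω => t) ω) ∈ Set.Icc 0 t := fun ω => ⟨ht, le_rfl⟩
  haveI inst1 : Nonempty {γ : Ω → ℝ // IsStoppingTime F (fun ω => (γ ω : WithTop ℝ)) ∧ ∀ ω, γ ω ∈ Set.Icc 0 t} :=
    ⟨⟨fun _ => t, isStoppingTime_const F t, hmemconst⟩⟩
  haveI inst2 : Nonempty {γ : Ω → ℝ // IsStoppingTime F (fun ω => (γ ω : WithTop ℝ)) ∧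
      ∀ ω, (∃ k : ℕ, k ≤ N ∧ γ ω = t - ts k) ∧ γ ω ∈ Set.Icc 0 t} :=
    ⟨⟨fun _ => t, isStoppingTime_const F t,
      fun ω => ⟨⟨0, Nat.zero_le _, by simp [hts0]⟩, hmemconst ω⟩⟩⟩
  -- bounded below
  have bdd1 : BddBelow (Set.range fun γ : {γ : Ω → ℝ // IsStoppingTime F (fun ω => (γ ω : WithTop ℝ)) ∧
      ∀ ω, γ ω ∈ Set.Icc 0 t} =>
      ∫ ω, ({ω' | γ.1 ω' < t}.indicator (fun ω' => g (t - γ.1 ω')) ω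
        + {ω' | γ.1 ω' = t ∧ 0 ≤ x + W t ω'}.indicator 1 ω) ∂P) := by
    refine ⟨0, fun y hy => ?_⟩
    obtain ⟨γ, rfl⟩ := hy
    exact hnonnegPay γ.1 γ.2.2
  have bdd2 : BddBelow (Set.range fun γ : {γ : Ω → ℝ // IsStoppingTime F (fun ω => (γ ω : WithTop ℝ)) ∧
      ∀ ω, (∃ k : ℕ, k ≤ N ∧ γ ω = t - ts k) ∧ γ ω ∈ Set.Icc 0 t} =>
      ∫ ω, ({ω' | γ.1 ω' < t}.indicator (fun ω' => g (t - γ.1 ω')) ω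
        + {ω' | γ.1 ω' = t ∧ 0 ≤ x + W t ω'}.indicator 1 ω) ∂P) := by
    refine ⟨0, fun y hy => ?_⟩
    obtain ⟨γ, rfl⟩ := hy
    exact hnonnegPay γ.1 fun ω => (γ.2.2 ω).2
  rw [stopValue]
  apply le_antisymm
  · refine le_ciInf fun γ => ?_
    exact ciInf_le bdd1 ⟨γ.1, γ.2.1, fun ω => (γ.2.2 ω).2⟩
  · refine le_ciInf fun γ => ?_
    obtain ⟨γ, hγst, hγb⟩ := γ
    -- the discretized stopping time
    set δ : Ω → ℝ := fun ω => t - ts (K (t - γ ω)) with hδ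
    have hδval : ∀ ω, (∃ k : ℕ, k ≤ N ∧ δ ω = t - ts k) ∧ δ ω ∈ Set.Icc 0 t := by
      intro ω
      have hs : 0 ≤ t - γ ω := sub_nonneg.2 (hγb ω).2
      obtain ⟨hKN, hKs⟩ := Kmem (t - γ ω) hs
      refine ⟨⟨K (t - γ ω), hKN, rfl⟩, ⟨?_, ?_⟩⟩
      · have := (hγb ω).1; simp only [hδ]; linarith
      · simp only [hδ]; linarith [tsnonneg _ hKN]
    have hδst : IsStoppingTime F (fun ω => (δ ω : WithTop ℝ)) := by
      intro u
      simp only [WithTop.coe_le_coe]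
      by_cases hex : ∃ k : ℕ, k ≤ N ∧ t - u ≤ ts k
      · set m := Nat.find hex with hm
        obtain ⟨hmN, hmu⟩ := Nat.find_spec hex
        have hset : {ω | δ ω ≤ u} = {ω | γ ω ≤ t - ts m} := by
          ext ω
          have hs : 0 ≤ t - γ ω := sub_nonneg.2 (hγb ω).2
          obtain ⟨hKN, hKs⟩ := Kmem (t - γ ω) hs
          simp only [Set.mem_setOf_eq, hδ]
          constructor
          · intro h
            have hP : K (t - γ ω) ≤ N ∧ t - u ≤ ts (K (t - γ ω)) := ⟨hKN, by linarith⟩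
            have hmle : m ≤ K (t - γ ω) := Nat.find_le hP
            have := tsmono m (K (t - γ ω)) hmle hKN
            linarith
          · intro h
            have h1 : ts m ≤ t - γ ω := by linarith
            have h2 : m ≤ K (t - γ ω) := Kle _ m hmN h1
            have := tsmono m (K (t - γ ω)) h2 hKN
            linarith
        rw [hset]
        exact F.mono (show t - ts m ≤ u by linarith) _ (by have := hγst (t - ts m); simp only [WithTop.coe_le_coe] at this; exact this)
      · have hset : {ω | δ ω ≤ u} = ∅ := by
          ext ω
          simp only [Set.mem_setOf_eq, Set.mem_empty_iff_false, iff_false, hδ]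
          intro h
          have hs : 0 ≤ t - γ ω := sub_nonneg.2 (hγb ω).2
          obtain ⟨hKN, hKs⟩ := Kmem (t - γ ω) hs
          exact hex ⟨K (t - γ ω), hKN, by linarith⟩
        rw [hset]
        exact @MeasurableSet.empty _ (F u)
    refine le_trans (ciInf_le bdd2 ⟨δ, hδst, hδval⟩) ?_
    refine integral_mono (hintPay δ (hmeasγ δ hδst) fun ω => (hδval ω).2)
      (hintPay γ (hmeasγ γ hγst) hγb) fun ω => ?_
    -- pointwise comparison of payoffs
    have hs : 0 ≤ t - γ ω := sub_nonneg.2 (hγb ω).2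
    obtain ⟨hKN, hKs⟩ := Kmem (t - γ ω) hs
    by_cases hlt : γ ω < t
    · -- γ ω < t
      have hγind : {ω' | γ ω' < t}.indicator (fun ω' => g (t - γ ω')) ω = g (t - γ ω) :=
        Set.indicator_of_mem (show ω ∈ {ω' | γ ω' < t} from hlt) _
      have hγind2 : {ω' | γ ω' = t ∧ 0 ≤ x + W t ω'}.indicator (1 : Ω → ℝ) ω = 0 :=
        Set.indicator_of_notMem (fun h => absurd h.1 (ne_of_lt hlt)) _
      by_cases h0 : ts (K (t - γ ω)) = 0
      · -- δ ω = t : payoff ≤ 1 = g (t - γ ω)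
        have hδω : δ ω = t := by simp [hδ, h0]
        have hδind : {ω' | δ ω' < t}.indicator (fun ω' => g (t - δ ω')) ω = 0 :=
          Set.indicator_of_notMem (by simp [Set.mem_setOf_eq, hδω]) _
        have hδind2 : {ω' | δ ω' = t ∧ 0 ≤ x + W t ω'}.indicator (1 : Ω → ℝ) ω ≤ 1 := by
          by_cases h : ω ∈ {ω' | δ ω' = t ∧ 0 ≤ x + W t ω'}
          · rw [Set.indicator_of_mem h]; norm_num
          · rw [Set.indicator_of_notMem h]; norm_num
        have hg1 : g (t - γ ω) = 1 := by
          rw [hgK (t - γ ω) hs, h0, hg.init]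
        rw [hγind, hγind2, hδind, hg1]
        linarith
      · -- δ ω < t : payoffs equal
        have h0' : 0 < ts (K (t - γ ω)) := lt_of_le_of_ne (tsnonneg _ hKN) (Ne.symm h0)
        have hδω : δ ω < t := by simp only [hδ]; linarith
        have hδωne : δ ω ≠ t := ne_of_lt hδω
        have hδind : {ω' | δ ω' < t}.indicator (fun ω' => g (t - δ ω')) ω = g (t - δ ω) :=
          Set.indicator_of_mem (show ω ∈ {ω' | δ ω' < t} from hδω) _
        have hδind2 : {ω' | δ ω' = t ∧ 0 ≤ x + W t ω'}.indicator (1 : Ω → ℝ) ω = 0 :=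
          Set.indicator_of_notMem (fun h => absurd h.1 hδωne) _
        have hgs : g (t - δ ω) = g (t - γ ω) := by
          have : t - δ ω = ts (K (t - γ ω)) := by simp [hδ]
          rw [this, ← hgK (t - γ ω) hs]
        rw [hγind, hγind2, hδind, hδind2, hgs]
    · -- γ ω = t
      have hγω : γ ω = t := le_antisymm (hγb ω).2 (not_lt.1 hlt)
      have hK0 : K (t - γ ω) = 0 := by
        apply tspos _ hKN
        have : t - γ ω = 0 := by rw [hγω]; ring
        linarith
      have hδω : δ ω = t := by simp [hδ, hK0, hts0]
      have hγind : {ω' | γ ω' < t}.indicator (fun ω' => g (t - γ ω')) ω = 0 :=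
        Set.indicator_of_notMem (by simp [Set.mem_setOf_eq, hγω]) _
      have hδind : {ω' | δ ω' < t}.indicator (fun ω' => g (t - δ ω')) ω = 0 :=
        Set.indicator_of_notMem (by simp [Set.mem_setOf_eq, hδω]) _
      have hind2 : {ω' | δ ω' = t ∧ 0 ≤ x + W t ω'}.indicator (1 : Ω → ℝ) ω =
          {ω' | γ ω' = t ∧ 0 ≤ x + W t ω'}.indicator (1 : Ω → ℝ) ω := by
        by_cases h : 0 ≤ x + W t ω
        · rw [Set.indicator_of_mem (show ω ∈ {ω' | δ ω' = t ∧ 0 ≤ x + W t ω'} from ⟨hδω, h⟩),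
            Set.indicator_of_mem (show ω ∈ {ω' | γ ω' = t ∧ 0 ≤ x + W t ω'} from ⟨hγω, h⟩)]
        · rw [Set.indicator_of_notMem (fun hh => h hh.2),
            Set.indicator_of_notMem (fun hh => h hh.2)]
      rw [hγind, hδind, hind2]

end
end

section
/- Let (B_n)_{n≥1} and B be barriers such that τ_{B_n} → τ_B almost surely as n → ∞, and let t ≥ 0 be such that P(τ_{B_n} > t) → P(τ_B > t). Then u_n(t,x) → u(t,x) as n → ∞ for every x ∈ ℝ, where u_n(t,x) := P(W_t ≤ x, τ_{B_n} > t) and u(t,x) := P(W_t ≤ x, τ_B > t). -/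
open MeasureTheory ProbabilityTheory Filter Set

noncomputable section

/-- Fatou-type eventual lower bound for arbitrary sets. -/
lemma aux_fatou {Ω : Type*} [MeasurableSpace Ω] (P : Measure Ω) [IsProbabilityMeasure P]
    {Sn : ℕ → Set Ω} {S : Set Ω}
    (h : ∀ᵐ ω ∂P, ω ∈ S → ∀ᶠ n in atTop, ω ∈ Sn n) (C : Set Ω) :
    ∀ c : ℝ, c < (P (C ∩ S)).toReal → ∀ᶠ n in atTop, c < (P (C ∩ Sn n)).toReal := by
  intro c hc
  set T : ℕ → Set Ω := fun N => ⋂ k, ⋂ (_ : N ≤ k), (C ∩ Sn k) with hT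
  have hTmono : Monotone T := by
    intro M N hMN
    exact fun ω hω => Set.mem_iInter₂.2 fun k hk => Set.mem_iInter₂.1 hω k (hMN.trans hk)
  have hsub : P (C ∩ S) ≤ P (⋃ N, T N) := by
    refine measure_mono_ae ?_
    filter_upwards [h] with ω hω hCS
    obtain ⟨N, hN⟩ := (eventually_atTop.1 (hω hCS.2))
    exact Set.mem_iUnion.2 ⟨N, Set.mem_iInter₂.2 fun k hk => ⟨hCS.1, hN k hk⟩⟩
  have hsup : P (C ∩ S) ≤ ⨆ N, P (T N) := by
    rw [← hTmono.directed_le.measure_iUnion]; exact hsub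
  have hN : ∃ N, c < (P (T N)).toReal := by
    by_contra hcon
    push_neg at hcon
    have hc0 : 0 ≤ c := le_trans ENNReal.toReal_nonneg (hcon 0)
    have : P (C ∩ S) ≤ ENNReal.ofReal c := by
      refine le_trans hsup (iSup_le fun N => ?_)
      exact (ENNReal.le_ofReal_iff_toReal_le (measure_ne_top _ _) hc0).2 (hcon N)
    have := ENNReal.toReal_le_toReal (measure_ne_top _ _) ENNReal.ofReal_ne_top |>.2 this
    rw [ENNReal.toReal_ofReal hc0] at this
    exact absurd hc (not_lt.2 this)
  obtain ⟨N, hN⟩ := hN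
  filter_upwards [eventually_ge_atTop N] with n hn
  refine lt_of_lt_of_le hN ?_
  refine (ENNReal.toReal_le_toReal (measure_ne_top _ _) (measure_ne_top _ _)).2 ?_
  exact measure_mono fun ω hω => Set.mem_iInter₂.1 hω n hn

/-- If `τ_{B_n} → τ_B` a.s. and `P(τ_{B_n} > t) → P(τ_B > t)`, then
`u_n(t,x) → u(t,x)` for every `x`. -/
theorem u_converges
    {Ω : Type*} [MeasurableSpace Ω] (P : Measure Ω) [IsProbabilityMeasure P]
    (W : ℝ → Ω → ℝ) (hBM : IsStandardBM P W)
    (Bn : ℕ → Set (ℝ × ℝ)) (hBn : ∀ n, IsBarrier (Bn n))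
    (B : Set (ℝ × ℝ)) (hB : IsBarrier B)
    (hconv : ∀ᵐ ω ∂P, Tendsto (fun n => tauB (Bn n) W ω) atTop (nhds (tauB B W ω)))
    (t : ℝ) (ht : 0 ≤ t)
    (hg : Tendsto (fun n => survival P (Bn n) W t) atTop (nhds (survival P B W t))) :
    ∀ x : ℝ, Tendsto (fun n => uFun P (Bn n) W t x) atTop (nhds (uFun P B W t x)) := by
  intro x
  set A : Set Ω := {ω | W t ω ≤ x} with hAdef
  have hA : MeasurableSet A :=
    measurableSet_le (hBM.meas t).measurable measurable_const
  set Sn : ℕ → Set Ω := fun n => {ω | (t : EReal) < tauB (Bn n) W ω} with hSndef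
  set S : Set Ω := {ω | (t : EReal) < tauB B W ω} with hSdef
  have h : ∀ᵐ ω ∂P, ω ∈ S → ∀ᶠ n in atTop, ω ∈ Sn n := by
    filter_upwards [hconv] with ω hω hS
    exact hω.eventually (isOpen_Ioi.mem_nhds hS)
  -- decomposition of measures
  have hsum : ∀ n, (P (Sn n)).toReal
      = (P (A ∩ Sn n)).toReal + (P (Aᶜ ∩ Sn n)).toReal := by
    intro n
    have := measure_inter_add_diff (μ := P) (Sn n) hA
    rw [Set.inter_comm, Set.diff_eq, Set.inter_comm (Sn n)] at this
    rw [← this, ENNReal.toReal_add (measure_ne_top _ _) (measure_ne_top _ _)]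
  have hsumS : (P S).toReal = (P (A ∩ S)).toReal + (P (Aᶜ ∩ S)).toReal := by
    have := measure_inter_add_diff (μ := P) S hA
    rw [Set.inter_comm, Set.diff_eq, Set.inter_comm S] at this
    rw [← this, ENNReal.toReal_add (measure_ne_top _ _) (measure_ne_top _ _)]
  have huFun : ∀ n, uFun P (Bn n) W t x = (P (A ∩ Sn n)).toReal := by
    intro n
    rfl
  have huFunS : uFun P B W t x = (P (A ∩ S)).toReal := rfl
  have hsurv : ∀ n, survival P (Bn n) W t = (P (Sn n)).toReal := fun n => rfl
  have hsurvS : survival P B W t = (P S).toReal := rfl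
  set a : ℝ := (P (A ∩ S)).toReal with hadef
  set b : ℝ := (P (Aᶜ ∩ S)).toReal with hbdef
  rw [huFunS]
  rw [show (fun n => uFun P (Bn n) W t x) = fun n => (P (A ∩ Sn n)).toReal from
    funext huFun]
  refine tendsto_order.2 ⟨fun c hc => aux_fatou P h A c hc, fun c hc => ?_⟩
  -- upper bound
  set ε : ℝ := (c - a) / 2 with hεdef
  have hε : 0 < ε := by simp only [hεdef]; linarith
  have h1 : ∀ᶠ n in atTop, b - ε < (P (Aᶜ ∩ Sn n)).toReal :=
    aux_fatou P h Aᶜ (b - ε) (by simp only [← hbdef]; linarith)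
  have h2 : ∀ᶠ n in atTop, survival P (Bn n) W t < survival P B W t + ε :=
    hg (Iio_mem_nhds (by linarith))
  filter_upwards [h1, h2] with n h1n h2n
  have hs := hsum n
  rw [← hsurv n] at hs
  have hsS := hsumS
  rw [← hsurvS] at hsS
  have : (P (A ∩ Sn n)).toReal = survival P (Bn n) W t - (P (Aᶜ ∩ Sn n)).toReal := by
    linarith
  rw [this]
  have : c = a + 2 * ε := by simp only [hεdef]; ring
  linarith

end
end

section
/- Let B be a barrier with boundary function b, and define the stopping time τ̃_B := inf{t > 0 : W_t > b(t)} (strict inequality). Then τ̃_B = τ_B almost surely. -/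
open MeasureTheory ProbabilityTheory Filter Set

noncomputable section

/-- The first passage time over the boundary with strict inequality:
`τ̃_B = inf {t > 0 : W_t > b(t)}`. -/
def tauStrict {Ω : Type*} (B : Set (ℝ × ℝ)) (W : ℝ → Ω → ℝ) (ω : Ω) : EReal :=
  ⨅ r : {r : ℝ // 0 < r ∧ boundary B r < ((W r ω : ℝ) : EReal)}, ((r.1 : ℝ) : EReal)

private lemma comap_le_sup_left {f g : Ω → ℝ} {h : Ω → ℝ}
    (hfgh : f = fun ω => g ω + h ω) :
    MeasurableSpace.comap f inferInstance ≤
      MeasurableSpace.comap g inferInstance ⊔ MeasurableSpace.comap h inferInstance := by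
  have hg : Measurable[MeasurableSpace.comap g inferInstance ⊔ MeasurableSpace.comap h inferInstance] g :=
    measurable_iff_comap_le.mpr le_sup_left
  have hh : Measurable[MeasurableSpace.comap g inferInstance ⊔ MeasurableSpace.comap h inferInstance] h :=
    measurable_iff_comap_le.mpr le_sup_right
  have : Measurable[MeasurableSpace.comap g inferInstance ⊔ MeasurableSpace.comap h inferInstance] f := by
    rw [hfgh]; exact hg.add hh
  exact measurable_iff_comap_le.mp this

private lemma comap_sub_le_sup (f g : Ω → ℝ) :
    MeasurableSpace.comap (fun ω => f ω - g ω) inferInstance ≤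
      MeasurableSpace.comap f inferInstance ⊔ MeasurableSpace.comap g inferInstance := by
  have hg : Measurable[MeasurableSpace.comap f inferInstance ⊔ MeasurableSpace.comap g inferInstance] f :=
    measurable_iff_comap_le.mpr le_sup_left
  have hh : Measurable[MeasurableSpace.comap f inferInstance ⊔ MeasurableSpace.comap g inferInstance] g :=
    measurable_iff_comap_le.mpr le_sup_right
  exact measurable_iff_comap_le.mp (hg.sub hh)

private lemma comap_const_le (c : ℝ) (m : MeasurableSpace Ω) :
    MeasurableSpace.comap (fun _ : Ω => c) inferInstance ≤ m := by
  rintro s ⟨E, hE, rfl⟩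
  classical
  by_cases hc : c ∈ E
  · simp only [Set.preimage_const, if_pos hc]; exact MeasurableSet.univ
  · simp only [Set.preimage_const, if_neg hc]; exact MeasurableSet.empty

/-- Grouping lemma for independence. -/
private lemma indep_sup_right_of_indep {mΩ : MeasurableSpace Ω} {P : Measure Ω}
    [IsProbabilityMeasure P] {m₁ m₂ m₃ : MeasurableSpace Ω}
    (h₁ : m₁ ≤ mΩ) (h₂ : m₂ ≤ mΩ) (h₃ : m₃ ≤ mΩ)
    (h12 : Indep m₁ m₂ P) (h3 : Indep m₃ (m₁ ⊔ m₂) P) :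
    Indep m₁ (m₂ ⊔ m₃) P := by
  have hgen1 : m₁ = MeasurableSpace.generateFrom {s | MeasurableSet[m₁] s} :=
    (@MeasurableSpace.generateFrom_measurableSet Ω m₁).symm
  set p2 : Set (Set Ω) := {s | ∃ B C, MeasurableSet[m₂] B ∧ MeasurableSet[m₃] C ∧ s = B ∩ C}
    with hp2def
  have hgen2 : m₂ ⊔ m₃ = MeasurableSpace.generateFrom p2 := by
    refine le_antisymm (sup_le ?_ ?_) (MeasurableSpace.generateFrom_le ?_)
    · intro s hs
      exact MeasurableSpace.measurableSet_generateFrom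
        ⟨s, Set.univ, hs, MeasurableSet.univ, (Set.inter_univ s).symm⟩
    · intro s hs
      exact MeasurableSpace.measurableSet_generateFrom
        ⟨Set.univ, s, MeasurableSet.univ, hs, (Set.univ_inter s).symm⟩
    · rintro s ⟨Bs, Cs, hBs, hCs, rfl⟩
      exact MeasurableSet.inter (le_sup_left (α := MeasurableSpace Ω) _ hBs)
        (le_sup_right (α := MeasurableSpace Ω) _ hCs)
  have hpi1 : IsPiSystem {s | MeasurableSet[m₁] s} := @MeasurableSpace.isPiSystem_measurableSet Ω m₁
  have hpi2 : IsPiSystem p2 := by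
    rintro s ⟨Bs, Cs, hBs, hCs, rfl⟩ t ⟨Bt, Ct, hBt, hCt, rfl⟩ -
    refine ⟨Bs ∩ Bt, Cs ∩ Ct, hBs.inter hBt, hCs.inter hCt, ?_⟩
    ext x; simp only [Set.mem_inter_iff]; tauto
  refine IndepSets.indep h₁ (sup_le h₂ h₃) hpi1 hpi2 hgen1 hgen2 ?_
  rw [IndepSets_iff]
  rintro A D hA ⟨Bd, Cd, hBd, hCd, rfl⟩
  have h3' := (Indep_iff _ _ _).mp h3
  have h12' := (Indep_iff _ _ _).mp h12
  have hAB : MeasurableSet[m₁ ⊔ m₂] (A ∩ Bd) :=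
    MeasurableSet.inter (le_sup_left (α := MeasurableSpace Ω) _ hA)
      (le_sup_right (α := MeasurableSpace Ω) _ hBd)
  have hB' : MeasurableSet[m₁ ⊔ m₂] Bd := le_sup_right (α := MeasurableSpace Ω) _ hBd
  have e1 : A ∩ (Bd ∩ Cd) = Cd ∩ (A ∩ Bd) := by
    ext x; simp only [Set.mem_inter_iff]; tauto
  have e2 : Bd ∩ Cd = Cd ∩ Bd := Set.inter_comm _ _
  rw [e1, h3' Cd (A ∩ Bd) hCd hAB, h12' A Bd hA hBd, e2, h3' Cd Bd hCd hB']
  ring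

private lemma indep_incr_finset {Ω : Type*} [mΩ : MeasurableSpace Ω] (P : Measure Ω)
    [IsProbabilityMeasure P] (W : ℝ → Ω → ℝ) (hBM : IsStandardBM P W)
    {a : ℝ} (ha : 0 < a) :
    ∀ s : Finset ℝ, (∀ t ∈ s, a ≤ t) →
      Indep (⨆ t ∈ s, MeasurableSpace.comap (fun ω => W t ω - W a ω) inferInstance)
        (MeasurableSpace.comap (fun ω => W a ω - W 0 ω) inferInstance) P := by
  classical
  have hmeasW : ∀ t, Measurable (W t) := fun t => (hBM.meas t).measurable
  have hYle : ∀ t : ℝ,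
      MeasurableSpace.comap (fun ω => W t ω - W a ω) inferInstance ≤ mΩ :=
    fun t => measurable_iff_comap_le.mp ((hmeasW t).sub (hmeasW a))
  have hXle : MeasurableSpace.comap (fun ω => W a ω - W 0 ω) inferInstance ≤ mΩ :=
    measurable_iff_comap_le.mp ((hmeasW a).sub (hmeasW 0))
  intro s
  induction s using Finset.strongInduction with
  | _ s ih =>
    intro hs
    rcases s.eq_empty_or_nonempty with rfl | hne
    · simpa using indep_bot_left _
    · set M := s.max' hne with hM
      have hMs : M ∈ s := s.max'_mem hne
      set s' := s.erase M with hs'def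
      have hIH : Indep (⨆ t ∈ s', MeasurableSpace.comap (fun ω => W t ω - W a ω) inferInstance)
          (MeasurableSpace.comap (fun ω => W a ω - W 0 ω) inferInstance) P :=
        ih s' (Finset.erase_ssubset hMs) (fun t ht => hs t (Finset.mem_of_mem_erase ht))
      have key : ∃ m : ℝ, a ≤ m ∧ m ≤ M ∧ (∀ t ∈ s', t ≤ m) ∧
          Indep (MeasurableSpace.comap (fun ω => W a ω - W 0 ω) inferInstance)
            ((⨆ t ∈ s', MeasurableSpace.comap (fun ω => W t ω - W a ω) inferInstance) ⊔
              MeasurableSpace.comap (fun ω => W m ω - W a ω) inferInstance) P := by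
        by_cases hcase : s'.Nonempty
        · refine ⟨s'.max' hcase, hs _ (Finset.mem_of_mem_erase (s'.max'_mem hcase)),
            Finset.le_max' s _ (Finset.mem_of_mem_erase (s'.max'_mem hcase)),
            fun t ht => Finset.le_max' s' t ht, ?_⟩
          have hle : MeasurableSpace.comap
              (fun ω => W (s'.max' hcase) ω - W a ω) inferInstance ≤
              ⨆ t ∈ s', MeasurableSpace.comap (fun ω => W t ω - W a ω) inferInstance := by
            exact le_biSup (fun t => MeasurableSpace.comap (fun ω => W t ω - W a ω) inferInstance) (s'.max'_mem hcase)
          rw [sup_eq_left.mpr hle]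
          exact hIH.symm
        · have hs'empty : s' = ∅ := Finset.not_nonempty_iff_eq_empty.mp hcase
          refine ⟨a, le_rfl, hs M hMs, ?_, ?_⟩
          · intro t ht; rw [hs'empty] at ht; exact absurd ht (Finset.notMem_empty t)
          · have hconst : (fun ω : Ω => W a ω - W a ω) = fun _ => (0:ℝ) := by
              funext ω; ring
            have hle2 : ((⨆ t ∈ s',
                MeasurableSpace.comap (fun ω => W t ω - W a ω) inferInstance) ⊔
                MeasurableSpace.comap (fun ω => W a ω - W a ω) inferInstance)
                ≤ (⊥ : MeasurableSpace Ω) := by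
              rw [hs'empty, hconst]
              simp only [Finset.notMem_empty, iSup_false, iSup_bot, bot_sup_eq]
              exact comap_const_le 0 ⊥
            exact indep_of_indep_of_le_right (indep_bot_right _) hle2
      obtain ⟨m, ham, hmM, hsm, hIndep12⟩ := key
      have h0m : (0:ℝ) ≤ m := le_trans ha.le ham
      have hΔ := hBM.indep m M h0m hmM
      have hΔle : MeasurableSpace.comap (fun ω => W M ω - W m ω) inferInstance ≤ mΩ :=
        measurable_iff_comap_le.mp ((hmeasW M).sub (hmeasW m))
      have hWle_past : ∀ t : ℝ, 0 ≤ t → t ≤ m →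
          MeasurableSpace.comap (W t) inferInstance ≤
            ⨆ u : Set.Icc (0:ℝ) m, MeasurableSpace.comap (W u) inferInstance :=
        fun t h1 h2 => le_iSup
          (fun u : Set.Icc (0:ℝ) m => MeasurableSpace.comap (W u) inferInstance) ⟨t, h1, h2⟩
      have hY_past : ∀ t : ℝ, 0 ≤ t → t ≤ m →
          MeasurableSpace.comap (fun ω => W t ω - W a ω) inferInstance ≤
            ⨆ u : Set.Icc (0:ℝ) m, MeasurableSpace.comap (W u) inferInstance :=
        fun t h1 h2 => le_trans (comap_sub_le_sup (W t) (W a))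
          (sup_le (hWle_past t h1 h2) (hWle_past a ha.le ham))
      have hX_past : MeasurableSpace.comap (fun ω => W a ω - W 0 ω) inferInstance ≤
          ⨆ u : Set.Icc (0:ℝ) m, MeasurableSpace.comap (W u) inferInstance :=
        le_trans (comap_sub_le_sup (W a) (W 0))
          (sup_le (hWle_past a ha.le ham) (hWle_past 0 le_rfl h0m))
      have h3 : Indep (MeasurableSpace.comap (fun ω => W M ω - W m ω) inferInstance)
          ((MeasurableSpace.comap (fun ω => W a ω - W 0 ω) inferInstance) ⊔
            ((⨆ t ∈ s', MeasurableSpace.comap (fun ω => W t ω - W a ω) inferInstance) ⊔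
              MeasurableSpace.comap (fun ω => W m ω - W a ω) inferInstance)) P :=
        indep_of_indep_of_le_right hΔ (sup_le hX_past (sup_le
          (iSup₂_le fun t ht => hY_past t (le_trans ha.le (hs t (Finset.mem_of_mem_erase ht)))
            (hsm t ht))
          (hY_past m h0m le_rfl)))
      have hgrp := indep_sup_right_of_indep hXle
        (sup_le (iSup₂_le fun t _ => hYle t) (hYle m)) hΔle hIndep12 h3
      refine indep_of_indep_of_le_left hgrp.symm ?_
      refine iSup₂_le fun t ht => ?_
      by_cases htM : t = M
      · have hdecomp : (fun ω : Ω => W t ω - W a ω)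
            = fun ω => (W m ω - W a ω) + (W M ω - W m ω) := by funext ω; rw [htM]; ring
        refine le_trans (comap_le_sup_left hdecomp) (sup_le ?_ le_sup_right)
        exact le_trans le_sup_right le_sup_left
      · have hts' : t ∈ s' := Finset.mem_erase.mpr ⟨htM, ht⟩
        exact le_trans (le_biSup (fun t => MeasurableSpace.comap (fun ω => W t ω - W a ω) inferInstance) hts') (le_trans le_sup_left le_sup_left)

private lemma indep_incr_countable {Ω : Type*} [mΩ : MeasurableSpace Ω] (P : Measure Ω)
    [IsProbabilityMeasure P] (W : ℝ → Ω → ℝ) (hBM : IsStandardBM P W)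
    {aq : ℚ} (ha : 0 < aq) (q : ℚ) :
    Indep (⨆ r : {r : ℚ // aq ≤ r ∧ r ≤ q},
        MeasurableSpace.comap (fun ω => W ((r : ℚ) : ℝ) ω - W ((aq : ℚ) : ℝ) ω) inferInstance)
      (MeasurableSpace.comap (fun ω => W ((aq : ℚ) : ℝ) ω - W 0 ω) inferInstance) P := by
  classical
  have hmeasW : ∀ t, Measurable (W t) := fun t => (hBM.meas t).measurable
  have hXle : MeasurableSpace.comap (fun ω => W ((aq : ℚ) : ℝ) ω - W 0 ω) inferInstance ≤ mΩ :=
    measurable_iff_comap_le.mp ((hmeasW _).sub (hmeasW 0))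
  have haR : (0:ℝ) < ((aq : ℚ) : ℝ) := by exact_mod_cast ha
  rcases isEmpty_or_nonempty {r : ℚ // aq ≤ r ∧ r ≤ q} with hE | hNE
  · rw [iSup_of_empty]
    exact indep_bot_left _
  · obtain ⟨e, he⟩ := exists_surjective_nat {r : ℚ // aq ≤ r ∧ r ≤ q}
    set m : ℕ → MeasurableSpace Ω := fun k =>
      ⨆ t ∈ (Finset.range (k+1)).image (fun i => (((e i : ℚ) : ℝ))),
        MeasurableSpace.comap (fun ω => W t ω - W ((aq : ℚ) : ℝ) ω) inferInstance with hm
    have hmono : Monotone m := by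
      intro i j hij
      apply biSup_mono
      intro x hx
      exact Finset.image_subset_image (Finset.range_subset_range.mpr (by omega)) hx
    have hindep : ∀ k, Indep (m k)
        (MeasurableSpace.comap (fun ω => W ((aq : ℚ) : ℝ) ω - W 0 ω) inferInstance) P := by
      intro k
      refine indep_incr_finset P W hBM haR _ (fun t ht => ?_)
      obtain ⟨i, -, rfl⟩ := Finset.mem_image.mp ht
      exact_mod_cast (e i).2.1
    have h_le : ∀ k, m k ≤ mΩ := fun k =>
      iSup₂_le fun t _ => measurable_iff_comap_le.mp ((hmeasW t).sub (hmeasW _))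
    have hbig := indep_iSup_of_monotone hindep h_le hXle hmono
    have heq : (⨆ k, m k) = ⨆ r : {r : ℚ // aq ≤ r ∧ r ≤ q},
        MeasurableSpace.comap (fun ω => W ((r : ℚ) : ℝ) ω - W ((aq : ℚ) : ℝ) ω) inferInstance := by
      apply le_antisymm
      · refine iSup_le fun k => iSup₂_le fun t ht => ?_
        obtain ⟨i, -, rfl⟩ := Finset.mem_image.mp ht
        exact le_iSup (fun r : {r : ℚ // aq ≤ r ∧ r ≤ q} =>
          MeasurableSpace.comap (fun ω => W ((r : ℚ) : ℝ) ω - W ((aq : ℚ) : ℝ) ω) inferInstance)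
          (e i)
      · refine iSup_le fun r => ?_
        obtain ⟨i, rfl⟩ := he r
        refine le_trans ?_ (le_iSup m i)
        exact le_biSup (fun t => MeasurableSpace.comap
          (fun ω => W t ω - W ((aq : ℚ) : ℝ) ω) inferInstance)
          (Finset.mem_image.mpr ⟨i, Finset.mem_range.mpr (Nat.lt_succ_self i), rfl⟩)
    rwa [heq] at hbig

private def aQ (n : ℕ) : ℚ := 1 / (n + 1)

private lemma aQ_pos (n : ℕ) : 0 < aQ n := by unfold aQ; positivity

private def idx (B : Set (ℝ × ℝ)) (q : ℚ) (n : ℕ) : Set (ℚ × ℚ × ℚ) :=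
  {p | aQ n ≤ p.2.1 ∧ p.2.1 ≤ p.2.2 ∧ p.2.2 ≤ q ∧
    ∃ t : ℝ, ((p.2.1 : ℚ) : ℝ) ≤ t ∧ t ≤ ((p.2.2 : ℚ) : ℝ) ∧
      boundary B t ≤ (((p.1 : ℚ) : ℝ) : EReal)}

private def FF {Ω : Type*} (B : Set (ℝ × ℝ)) (W : ℝ → Ω → ℝ) (q : ℚ) (n : ℕ) (ω : Ω) :
    EReal :=
  ⨆ p : idx B q n, ⨅ r : {r : ℚ // p.1.2.1 ≤ r ∧ r ≤ p.1.2.2},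
    (((W ((r.1 : ℚ) : ℝ) ω - W ((aQ n : ℚ) : ℝ) ω - ((p.1.1 : ℚ) : ℝ)) : ℝ) : EReal)

private def SIG {Ω : Type*} (W : ℝ → Ω → ℝ) (q : ℚ) (n : ℕ) : MeasurableSpace Ω :=
  ⨆ r : {r : ℚ // aQ n ≤ r ∧ r ≤ q},
    MeasurableSpace.comap (fun ω => W ((r : ℚ) : ℝ) ω - W ((aQ n : ℚ) : ℝ) ω) inferInstance

private lemma FF_null {Ω : Type*} [mΩ : MeasurableSpace Ω] (P : Measure Ω)
    [IsProbabilityMeasure P] (W : ℝ → Ω → ℝ) (hBM : IsStandardBM P W)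
    (B : Set (ℝ × ℝ)) (q : ℚ) (n : ℕ) :
    P {ω | FF B W q n ω = ((W 0 ω - W ((aQ n : ℚ) : ℝ) ω : ℝ) : EReal)} = 0 := by
  classical
  have ha : 0 < aQ n := aQ_pos n
  have haR : (0:ℝ) < ((aQ n : ℚ) : ℝ) := by exact_mod_cast ha
  have hmeasW : ∀ t, Measurable (W t) := fun t => (hBM.meas t).measurable
  set X : Ω → ℝ := fun ω => W ((aQ n : ℚ) : ℝ) ω - W 0 ω with hXdef
  have hXmeas : Measurable X := (hmeasW _).sub (hmeasW 0)
  have hSle : SIG W q n ≤ mΩ := iSup_le fun r =>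
    measurable_iff_comap_le.mp ((hmeasW _).sub (hmeasW _))
  have hFS : Measurable[SIG W q n] (FF B W q n) := by
    apply Measurable.iSup
    intro p
    apply Measurable.iInf
    intro r
    have hmem : aQ n ≤ r.1 ∧ r.1 ≤ q :=
      ⟨le_trans p.2.1 r.2.1, le_trans r.2.2 p.2.2.2.1⟩
    have h1 : Measurable[SIG W q n] (fun ω => W ((r.1 : ℚ) : ℝ) ω - W ((aQ n : ℚ) : ℝ) ω) :=
      measurable_iff_comap_le.mpr (le_iSup
        (fun r : {r : ℚ // aQ n ≤ r ∧ r ≤ q} =>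
          MeasurableSpace.comap (fun ω => W ((r : ℚ) : ℝ) ω - W ((aQ n : ℚ) : ℝ) ω)
            inferInstance) ⟨r.1, hmem⟩)
    exact (h1.sub measurable_const).coe_real_ereal
  have hF : Measurable (FF B W q n) := hFS.mono hSle le_rfl
  have hbig := indep_incr_countable P W hBM ha q
  have hIndF : Indep (MeasurableSpace.comap X inferInstance)
      (MeasurableSpace.comap (FF B W q n) inferInstance) P :=
    indep_of_indep_of_le_right hbig.symm (measurable_iff_comap_le.mp hFS)
  have hIndepFun : IndepFun X (FF B W q n) P := (IndepFun_iff_Indep _ _ _).mpr hIndF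
  set H : Ω → ℝ := fun ω => (FF B W q n ω).toReal with hHdef
  have hH : Measurable H := measurable_ereal_toReal.comp hF
  have hIndXH : IndepFun H X P := by
    have := hIndepFun.comp measurable_id measurable_ereal_toReal
    exact this.symm
  have hsub : {ω | FF B W q n ω = ((W 0 ω - W ((aQ n : ℚ) : ℝ) ω : ℝ) : EReal)}
      ⊆ {ω | H ω + X ω = 0} := by
    intro ω hω
    simp only [Set.mem_setOf_eq] at hω ⊢
    have : H ω = W 0 ω - W ((aQ n : ℚ) : ℝ) ω := by
      rw [hHdef]; simp only [hω, EReal.toReal_coe]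
    rw [this, hXdef]; ring
  refine measure_mono_null hsub ?_
  have hv : Real.toNNReal (((aQ n : ℚ) : ℝ) - 0) ≠ 0 := by
    rw [sub_zero, Ne, Real.toNNReal_eq_zero]
    exact not_le.mpr haR
  have hXlaw : P.map X = gaussianReal 0 (Real.toNNReal (((aQ n : ℚ) : ℝ) - 0)) :=
    hBM.incr 0 _ le_rfl haR.le
  have hD : MeasurableSet {p : ℝ × ℝ | p.1 + p.2 = 0} :=
    measurableSet_eq_fun (measurable_fst.add measurable_snd) measurable_const
  have hmap : P.map (fun ω => (H ω, X ω)) = (P.map H).prod (P.map X) :=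
    (indepFun_iff_map_prod_eq_prod_map_map hH.aemeasurable hXmeas.aemeasurable).mp hIndXH
  have hzero : ∀ x : ℝ, (P.map X) (Prod.mk x ⁻¹' {p : ℝ × ℝ | p.1 + p.2 = 0}) = 0 := by
    intro x
    have hset : Prod.mk x ⁻¹' {p : ℝ × ℝ | p.1 + p.2 = 0} = {-x} := by
      ext y
      simp only [Set.mem_preimage, Set.mem_setOf_eq, Set.mem_singleton_iff]
      constructor
      · intro h; linarith
      · intro h; rw [h]; ring
    rw [hset, hXlaw]
    exact (gaussianReal_absolutelyContinuous 0 hv) Real.volume_singleton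
  calc P {ω | H ω + X ω = 0}
      = P ((fun ω => (H ω, X ω)) ⁻¹' {p : ℝ × ℝ | p.1 + p.2 = 0}) := rfl
    _ = (P.map (fun ω => (H ω, X ω))) {p : ℝ × ℝ | p.1 + p.2 = 0} :=
        (Measure.map_apply (hH.prodMk hXmeas) hD).symm
    _ = ((P.map H).prod (P.map X)) {p : ℝ × ℝ | p.1 + p.2 = 0} := by rw [hmap]
    _ = ∫⁻ x, (P.map X) (Prod.mk x ⁻¹' {p : ℝ × ℝ | p.1 + p.2 = 0}) ∂(P.map H) :=
        Measure.prod_apply hD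
    _ = 0 := by simp only [hzero, lintegral_zero]

private lemma le_coe_of_forall_add {x : EReal} {y : ℝ}
    (h : ∀ ε : ℝ, 0 < ε → x ≤ ((y + ε : ℝ) : EReal)) : x ≤ (y : EReal) := by
  by_contra hcon
  push_neg at hcon
  obtain ⟨z, hz1, hz2⟩ := EReal.exists_between_coe_real hcon
  have hy : y < z := by exact_mod_cast hz1
  have h2 := h (z - y) (by linarith)
  rw [show y + (z - y) = z by ring] at h2
  exact absurd (lt_of_lt_of_le hz2 h2) (lt_irrefl _)

private lemma coe_le_of_forall_sub {x : EReal} {y : ℝ}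
    (h : ∀ ε : ℝ, 0 < ε → ((y - ε : ℝ) : EReal) ≤ x) : (y : EReal) ≤ x := by
  by_contra hcon
  push_neg at hcon
  obtain ⟨z, hz1, hz2⟩ := EReal.exists_between_coe_real hcon
  have hy : z < y := by exact_mod_cast hz2
  have h2 := h (y - z) (by linarith)
  rw [show y - (y - z) = z by ring] at h2
  exact absurd (lt_of_le_of_lt h2 hz1) (lt_irrefl _)

/-- Lemma: `τ̃_B = τ_B` almost surely. -/
theorem tauStrict_eq_tauB
    {Ω : Type*} [MeasurableSpace Ω] (P : Measure Ω) [IsProbabilityMeasure P]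
    (W : ℝ → Ω → ℝ) (hBM : IsStandardBM P W)
    (B : Set (ℝ × ℝ)) (hB : IsBarrier B) :
    ∀ᵐ ω ∂P, tauStrict B W ω = tauB B W ω := by
  classical
  have hle : ∀ ω, tauB B W ω ≤ tauStrict B W ω := by
    intro ω
    refine le_iInf fun r => ?_
    exact iInf_le_of_le ⟨r.1, r.2.1, le_of_lt r.2.2⟩ le_rfl
  have hW0 : P {ω | ¬ W 0 ω = 0} = 0 := by
    have h := hBM.init; rwa [ae_iff] at h
  rw [ae_iff]
  refine measure_mono_null (?_ : _ ⊆ {ω | ¬ W 0 ω = 0} ∪ ⋃ (q : ℚ) (n : ℕ),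
      {ω | FF B W q n ω = ((W 0 ω - W ((aQ n : ℚ) : ℝ) ω : ℝ) : EReal)}) ?_
  swap
  · exact measure_union_null hW0 (measure_iUnion_null fun q =>
      measure_iUnion_null fun n => FF_null P W hBM B q n)
  intro ω hω
  simp only [Set.mem_setOf_eq] at hω
  by_cases hW0ω : W 0 ω = 0
  swap
  · exact Set.mem_union_left _ hW0ω
  refine Set.mem_union_right _ ?_
  have hlt : tauB B W ω < tauStrict B W ω := (hle ω).lt_of_ne fun h => hω h.symm
  obtain ⟨q, hq1, hq2⟩ := EReal.exists_rat_btwn_of_lt hlt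
  -- hq1 : tauB < ((q:ℝ):EReal), hq2 : ((q:ℝ):EReal) < tauStrict
  have hub : ∀ t : ℝ, 0 < t → t ≤ (q : ℝ) → ((W t ω : ℝ) : EReal) ≤ boundary B t := by
    intro t ht0 htq
    by_contra hcon
    push_neg at hcon
    have h1 : tauStrict B W ω ≤ ((t : ℝ) : EReal) :=
      iInf_le_of_le ⟨t, ht0, hcon⟩ le_rfl
    have h2 : tauStrict B W ω ≤ (((q : ℝ) : ℝ) : EReal) :=
      le_trans h1 (by exact_mod_cast htq)
    exact absurd (lt_of_lt_of_le hq2 h2) (lt_irrefl _)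
  have hex : ∃ r : {r : ℝ // 0 < r ∧ boundary B r ≤ ((W r ω : ℝ) : EReal)},
      ((r.1 : ℝ) : EReal) < (((q : ℝ) : ℝ) : EReal) := by
    rw [← iInf_lt_iff]
    exact hq1
  obtain ⟨⟨s, hs0, hsb⟩, hsq'⟩ := hex
  have hsq : s < (q : ℝ) := by exact_mod_cast hsq'
  have htouch : boundary B s = ((W s ω : ℝ) : EReal) :=
    le_antisymm hsb (hub s hs0 hsq.le)
  obtain ⟨n, hn⟩ := exists_nat_one_div_lt hs0
  have haq : ((aQ n : ℚ) : ℝ) = 1 / ((n : ℝ) + 1) := by unfold aQ; push_cast; ring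
  have haS : ((aQ n : ℚ) : ℝ) < s := by rw [haq]; exact hn
  have haR : (0 : ℝ) < ((aQ n : ℚ) : ℝ) := by exact_mod_cast aQ_pos n
  refine Set.mem_iUnion.mpr ⟨q, Set.mem_iUnion.mpr ⟨n, ?_⟩⟩
  show FF B W q n ω = ((W 0 ω - W ((aQ n : ℚ) : ℝ) ω : ℝ) : EReal)
  rw [hW0ω]
  have hupper : FF B W q n ω ≤ (((0 : ℝ) - W ((aQ n : ℚ) : ℝ) ω : ℝ) : EReal) := by
    refine iSup_le fun p => ?_
    obtain ⟨hau, huv, hvq, t₀, ht₀u, ht₀v, ht₀b⟩ := p.2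
    have hu0 : (0 : ℚ) < p.1.2.1 := lt_of_lt_of_le (aQ_pos n) hau
    have ht₀0 : 0 < t₀ := lt_of_lt_of_le (by exact_mod_cast hu0) ht₀u
    have ht₀q : t₀ ≤ (q : ℝ) := le_trans ht₀v (by exact_mod_cast hvq)
    have hWt₀ : W t₀ ω ≤ ((p.1.1 : ℚ) : ℝ) := by
      have h3 := le_trans (hub t₀ ht₀0 ht₀q) ht₀b
      exact_mod_cast h3
    refine le_coe_of_forall_add fun ε hε => ?_
    -- find a rational r in [u,v] with W r ≤ W t₀ + ε
    have happ : ∃ r : ℚ, p.1.2.1 ≤ r ∧ r ≤ p.1.2.2 ∧ W ((r : ℚ) : ℝ) ω ≤ W t₀ ω + ε := by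
      by_cases hcase : p.1.2.1 = p.1.2.2
      · refine ⟨p.1.2.1, le_rfl, le_of_eq hcase, ?_⟩
        have : ((p.1.2.1 : ℚ) : ℝ) = t₀ := by
          have h4 : ((p.1.2.1 : ℚ) : ℝ) = ((p.1.2.2 : ℚ) : ℝ) := by exact_mod_cast hcase
          linarith [ht₀u, ht₀v, h4]
        rw [this]; linarith
      · have huv' : ((p.1.2.1 : ℚ) : ℝ) < ((p.1.2.2 : ℚ) : ℝ) := by
          exact_mod_cast lt_of_le_of_ne huv hcase
        obtain ⟨δ, hδ0, hδ⟩ := Metric.continuousAt_iff.mp ((hBM.cont ω).continuousAt (x := t₀))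
          ε hε
        set lo : ℝ := max ((p.1.2.1 : ℚ) : ℝ) (t₀ - δ) with hlo
        set hi : ℝ := min ((p.1.2.2 : ℚ) : ℝ) (t₀ + δ) with hhi
        have hlohi : lo < hi := by
          by_cases ht : t₀ < ((p.1.2.2 : ℚ) : ℝ)
          · exact lt_of_le_of_lt (max_le ht₀u (by linarith)) (lt_min ht (by linarith))
          · have heq : t₀ = ((p.1.2.2 : ℚ) : ℝ) := le_antisymm ht₀v (not_lt.mp ht)
            refine lt_of_lt_of_le (max_lt (by rw [heq]; exact huv')
              (by linarith)) (le_min (le_of_eq heq) (by linarith))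
        obtain ⟨r, hr1, hr2⟩ := exists_rat_btwn hlohi
        have hru : p.1.2.1 ≤ r := by
          have : ((p.1.2.1 : ℚ) : ℝ) < (r : ℝ) := lt_of_le_of_lt (le_max_left _ _) hr1
          exact_mod_cast this.le
        have hrv : r ≤ p.1.2.2 := by
          have : (r : ℝ) < ((p.1.2.2 : ℚ) : ℝ) := lt_of_lt_of_le hr2 (min_le_left _ _)
          exact_mod_cast this.le
        refine ⟨r, hru, hrv, ?_⟩
        have hdist : dist ((r : ℚ) : ℝ) t₀ < δ := by
          rw [Real.dist_eq, abs_lt]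
          constructor
          · have : t₀ - δ < (r : ℝ) := lt_of_le_of_lt (le_max_right _ _) hr1
            linarith
          · have : (r : ℝ) < t₀ + δ := lt_of_lt_of_le hr2 (min_le_right _ _)
            linarith
        have := hδ hdist
        rw [Real.dist_eq, abs_lt] at this
        linarith [this.1, this.2]
    obtain ⟨r, hru, hrv, hWr⟩ := happ
    refine le_trans (iInf_le_of_le ⟨r, hru, hrv⟩ le_rfl) ?_
    rw [EReal.coe_le_coe_iff]
    linarith
  have hlower : (((0 : ℝ) - W ((aQ n : ℚ) : ℝ) ω : ℝ) : EReal) ≤ FF B W q n ω := by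
    refine coe_le_of_forall_sub fun ε hε => ?_
    obtain ⟨δ, hδ0, hδ⟩ := Metric.continuousAt_iff.mp ((hBM.cont ω).continuousAt (x := s))
      (ε/3) (by linarith)
    obtain ⟨c, hc1, hc2⟩ := exists_rat_btwn (show W s ω < W s ω + ε/3 by linarith)
    have hexu : ∃ u : ℚ, aQ n ≤ u ∧ ((u : ℚ) : ℝ) ≤ s ∧ s - δ < ((u : ℚ) : ℝ) := by
      by_cases hcase : s - δ < ((aQ n : ℚ) : ℝ)
      · exact ⟨aQ n, le_rfl, haS.le, hcase⟩
      · obtain ⟨u, hu1, hu2⟩ := exists_rat_btwn (show s - δ < s by linarith)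
        refine ⟨u, ?_, hu2.le, hu1⟩
        have : ((aQ n : ℚ) : ℝ) ≤ (u : ℝ) := le_trans (not_lt.mp hcase) hu1.le
        exact_mod_cast this
    obtain ⟨u, hqu, hu_s, hu_δ⟩ := hexu
    obtain ⟨v, hv1, hv2⟩ := exists_rat_btwn (show s < min ((q : ℚ) : ℝ) (s + δ) from
      lt_min hsq (by linarith))
    have hvq : v ≤ q := by
      have : (v : ℝ) < ((q : ℚ) : ℝ) := lt_of_lt_of_le hv2 (min_le_left _ _)
      exact_mod_cast this.le
    have hvδ : (v : ℝ) < s + δ := lt_of_lt_of_le hv2 (min_le_right _ _)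
    have huv : u ≤ v := by
      have : ((u : ℚ) : ℝ) ≤ ((v : ℚ) : ℝ) := le_trans hu_s hv1.le
      exact_mod_cast this
    have hbsc : boundary B s ≤ (((c : ℚ) : ℝ) : EReal) := by
      rw [htouch]
      exact_mod_cast EReal.coe_le_coe_iff.mpr hc1.le
    have hpmem : ((c, u, v) : ℚ × ℚ × ℚ) ∈ idx B q n :=
      ⟨hqu, huv, hvq, s, hu_s, hv1.le, hbsc⟩
    refine le_trans ?_ (le_iSup_of_le ⟨(c, u, v), hpmem⟩ le_rfl)
    refine le_iInf fun r => ?_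
    rw [EReal.coe_le_coe_iff]
    have hr1 : ((u : ℚ) : ℝ) ≤ ((r.1 : ℚ) : ℝ) := by exact_mod_cast r.2.1
    have hr2 : ((r.1 : ℚ) : ℝ) ≤ ((v : ℚ) : ℝ) := by exact_mod_cast r.2.2
    have hdist : dist ((r.1 : ℚ) : ℝ) s < δ := by
      rw [Real.dist_eq, abs_lt]
      constructor
      · linarith
      · linarith
    have hW := hδ hdist
    rw [Real.dist_eq, abs_lt] at hW
    have hcW : ((c : ℚ) : ℝ) ≤ W s ω + ε/3 := by exact_mod_cast hc2.le
    have := hW.1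
    linarith
  exact le_antisymm hupper hlower


end
end

section
/- Let g be a survival distribution function and v the value of the associated optimal stopping problem. Then for every t ≥ 0 and x ∈ ℝ, g(t)·P(x + W_t ≥ 0) ≤ v(t,x) ≤ min{g(t), P(x + W_t ≥ 0)}; consequently, for each fixed t, v(t,·) is non-decreasing, lim_{x→−∞} v(t,x) = 0 and lim_{x→∞} v(t,x) = g(t). -/
open MeasureTheory ProbabilityTheory Filter Set

noncomputable section

/-- Elementary bounds for the optimal stopping value:
`g(t)·P(x + W_t ≥ 0) ≤ v(t,x) ≤ min{g(t), P(x + W_t ≥ 0)}`; consequently `v(t,·)` is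
non-decreasing with limits `0` at `-∞` and `g(t)` at `+∞`. -/
theorem stopValue_bounds
    {Ω : Type*} [MeasurableSpace Ω] (P : Measure Ω) [IsProbabilityMeasure P]
    (W : ℝ → Ω → ℝ) (hBM : IsStandardBM P W)
    (g : ℝ → ℝ) (hg : IsSurvival g) :
    ∀ t : ℝ, 0 ≤ t →
      (∀ x : ℝ,
        g t * (P {ω | 0 ≤ x + W t ω}).toReal ≤ stopValue P W hBM.meas g t x ∧
        stopValue P W hBM.meas g t x ≤ min (g t) ((P {ω | 0 ≤ x + W t ω}).toReal)) ∧
      Monotone (fun x => stopValue P W hBM.meas g t x) ∧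
      Tendsto (fun x => stopValue P W hBM.meas g t x) atBot (nhds 0) ∧
      Tendsto (fun x => stopValue P W hBM.meas g t x) atTop (nhds (g t)) := by

  intro t ht
  classical
  have hWt : Measurable (W t) := (hBM.meas t).measurable
  have hA : ∀ x : ℝ, MeasurableSet {ω | 0 ≤ x + W t ω} := fun x =>
    measurableSet_le measurable_const (measurable_const.add hWt)
  set p : ℝ → ℝ := fun x => (P {ω | 0 ≤ x + W t ω}).toReal with hp
  have hp_mono : Monotone p := by
    intro a b hab
    exact ENNReal.toReal_mono (measure_ne_top P _)
      (measure_mono fun ω hω => le_trans hω (add_le_add hab le_rfl))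
  have hp_nonneg : ∀ x, 0 ≤ p x := fun x => ENNReal.toReal_nonneg
  have hp_le_one : ∀ x, p x ≤ 1 := fun x => by
    simpa using ENNReal.toReal_mono ENNReal.one_ne_top prob_le_one
  have hp_atBot : Tendsto p atBot (nhds 0) := by
    have hbdd : BddBelow (range p) := ⟨0, by rintro _ ⟨x, rfl⟩; exact hp_nonneg x⟩
    have h1 : Tendsto p atBot (nhds (⨅ x, p x)) := tendsto_atBot_ciInf hp_mono hbdd
    have h2 : Tendsto (fun n : ℕ => p (-(n : ℝ))) atTop (nhds (⨅ x, p x)) :=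
      h1.comp (tendsto_neg_atBot_iff.mpr tendsto_natCast_atTop_atTop)
    have hanti : Antitone fun n : ℕ => {ω | 0 ≤ -(n : ℝ) + W t ω} := by
      intro m n hmn ω hω
      have : (-(n : ℝ)) ≤ -(m : ℝ) := by exact_mod_cast neg_le_neg (by exact_mod_cast hmn)
      exact le_trans hω (add_le_add this le_rfl)
    have hempty : (⋂ n : ℕ, {ω | 0 ≤ -(n : ℝ) + W t ω}) = (∅ : Set Ω) := by
      refine eq_empty_iff_forall_notMem.2 fun ω hω => ?_
      obtain ⟨n, hn⟩ := exists_nat_gt (W t ω)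
      have := mem_iInter.1 hω n
      simp only [mem_setOf_eq] at this
      linarith
    have h3 : Tendsto (fun n : ℕ => P {ω | 0 ≤ -(n : ℝ) + W t ω}) atTop (nhds 0) := by
      have := tendsto_measure_iInter_atTop (μ := P)
        (s := fun n : ℕ => {ω | 0 ≤ -(n : ℝ) + W t ω})
        (fun n => (hA _).nullMeasurableSet) hanti ⟨0, measure_ne_top P _⟩
      rw [hempty] at this
      simpa [Function.comp_def] using this
    have h4 : Tendsto (fun n : ℕ => p (-(n : ℝ))) atTop (nhds 0) := by
      have := (ENNReal.tendsto_toReal (by simp)).comp h3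
      simpa [hp, Function.comp_def] using this
    have : (⨅ x, p x) = 0 := tendsto_nhds_unique h2 h4
    rwa [this] at h1
  have hp_atTop : Tendsto p atTop (nhds 1) := by
    have hbdd : BddAbove (range p) := ⟨1, by rintro _ ⟨x, rfl⟩; exact hp_le_one x⟩
    have h1 : Tendsto p atTop (nhds (⨆ x, p x)) := tendsto_atTop_ciSup hp_mono hbdd
    have h2 : Tendsto (fun n : ℕ => p (n : ℝ)) atTop (nhds (⨆ x, p x)) :=
      h1.comp tendsto_natCast_atTop_atTop
    have hmonos : Monotone fun n : ℕ => {ω | 0 ≤ (n : ℝ) + W t ω} := by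
      intro m n hmn ω hω
      have : ((m : ℝ)) ≤ (n : ℝ) := by exact_mod_cast hmn
      exact le_trans hω (add_le_add this le_rfl)
    have huniv : (⋃ n : ℕ, {ω | 0 ≤ (n : ℝ) + W t ω}) = (univ : Set Ω) := by
      refine eq_univ_iff_forall.2 fun ω => ?_
      obtain ⟨n, hn⟩ := exists_nat_ge (-(W t ω))
      exact mem_iUnion.2 ⟨n, by simp only [mem_setOf_eq]; linarith⟩
    have h3 : Tendsto (fun n : ℕ => P {ω | 0 ≤ (n : ℝ) + W t ω}) atTop (nhds 1) := by
      have := tendsto_measure_iUnion_atTop (μ := P)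
        (s := fun n : ℕ => {ω | 0 ≤ (n : ℝ) + W t ω}) hmonos
      rw [huniv, measure_univ] at this
      exact this
    have h4 : Tendsto (fun n : ℕ => p (n : ℝ)) atTop (nhds 1) := by
      have := (ENNReal.tendsto_toReal ENNReal.one_ne_top).comp h3
      simpa [hp, Function.comp_def] using this
    have : (⨆ x, p x) = 1 := tendsto_nhds_unique h2 h4
    rwa [this] at h1
  -- stopping time machinery
  have hmγ : ∀ γ : Ω → ℝ, IsStoppingTime (Filtration.natural W hBM.meas) (fun ω => (γ ω : WithTop ℝ)) →
      (∀ ω, γ ω ∈ Set.Icc 0 t) → Measurable γ := fun γ h1 h2 => by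
    have h := ((h1.measurable_of_le (i := t) fun ω => WithTop.coe_le_coe.2 (h2 ω).2).mono
      ((Filtration.natural W hBM.meas).le t) le_rfl).untopD 0
    simpa using h
  have hGanti : Antitone fun s : ℝ => g (max s 0) := fun a b hab =>
    hg.mono (le_max_right a 0) (le_max_right b 0) (max_le_max hab le_rfl)
  have hGmeas : Measurable fun s : ℝ => g (max s 0) := hGanti.measurable
  have hint : ∀ (x : ℝ) (γ : Ω → ℝ), IsStoppingTime (Filtration.natural W hBM.meas) (fun ω => (γ ω : WithTop ℝ)) →
      (∀ ω, γ ω ∈ Set.Icc 0 t) →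
      Integrable (fun ω => ({ω' | γ ω' < t}.indicator (fun ω' => g (t - γ ω')) ω
        + {ω' | γ ω' = t ∧ 0 ≤ x + W t ω'}.indicator 1 ω)) P := by
    intro x γ h1 h2
    have hγm := hmγ γ h1 h2
    have hset1 : MeasurableSet {ω | γ ω < t} := measurableSet_lt hγm measurable_const
    have hset2 : MeasurableSet {ω | γ ω = t ∧ 0 ≤ x + W t ω} := by
      have he : {ω | γ ω = t ∧ 0 ≤ x + W t ω} = {ω | γ ω = t} ∩ {ω | 0 ≤ x + W t ω} := rfl
      rw [he]
      exact (measurableSet_eq_fun hγm measurable_const).inter (hA x)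
    have heq : (fun ω => g (t - γ ω)) = fun ω => g (max (t - γ ω) 0) := by
      funext ω; rw [max_eq_left (by linarith [(h2 ω).2])]
    refine Integrable.add ?_ ?_
    · refine Integrable.indicator ?_ hset1
      rw [heq]
      refine Integrable.mono' (integrable_const 1)
        ((hGmeas.comp (measurable_const.sub hγm)).aestronglyMeasurable)
        (ae_of_all _ fun ω => ?_)
      have h0 : (0:ℝ) ≤ t - γ ω := by linarith [(h2 ω).2]
      have hm := hg.mem (max (t - γ ω) 0) (le_max_right _ _)
      rw [Real.norm_eq_abs, abs_le]
      exact ⟨by linarith [hm.1], hm.2⟩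
    · exact (integrable_const (1:ℝ)).indicator hset2
  have hFnonneg : ∀ (x : ℝ) (γ : Ω → ℝ), (∀ ω, γ ω ∈ Set.Icc 0 t) →
      ∀ ω, 0 ≤ ({ω' | γ ω' < t}.indicator (fun ω' => g (t - γ ω')) ω
        + {ω' | γ ω' = t ∧ 0 ≤ x + W t ω'}.indicator 1 ω) := by
    intro x γ h2 ω
    refine add_nonneg (Set.indicator_nonneg (fun ω' _ => ?_) ω)
      (Set.indicator_nonneg (fun _ _ => zero_le_one) ω)
    exact (hg.mem _ (by linarith [(h2 ω').2])).1
  have hgt := hg.mem t ht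
  -- pointwise lower bound
  have hptwise : ∀ (x : ℝ) (γ : Ω → ℝ), (∀ ω, γ ω ∈ Set.Icc 0 t) → ∀ ω,
      g t * ({ω' | 0 ≤ x + W t ω'}.indicator 1 ω)
        ≤ ({ω' | γ ω' < t}.indicator (fun ω' => g (t - γ ω')) ω
          + {ω' | γ ω' = t ∧ 0 ≤ x + W t ω'}.indicator 1 ω) := by
    intro x γ h2 ω
    have hle := (h2 ω).2
    by_cases hc2 : γ ω < t
    · have key : g t ≤ g (t - γ ω) :=
        hg.mono (mem_Ici.2 (by linarith)) (mem_Ici.2 ht) (by linarith [(h2 ω).1])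
      have hpos : (0:ℝ) ≤ g (t - γ ω) := (hg.mem _ (by linarith)).1
      have hne : ¬ (γ ω = t ∧ 0 ≤ x + W t ω) := fun h => absurd h.1 (ne_of_lt hc2)
      simp only [Set.indicator_apply, mem_setOf_eq, hc2, if_true, hne, if_false,
        Pi.one_apply, add_zero]
      split_ifs with hc1
      · simpa using key
      · simpa using hpos
    · have heqt : γ ω = t := le_antisymm hle (not_lt.1 hc2)
      simp only [Set.indicator_apply, mem_setOf_eq, heqt, lt_self_iff_false, if_false,
        eq_self_iff_true, true_and, Pi.one_apply, zero_add]
      split_ifs with hc1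
      · simpa using hgt.2
      · simp
  -- lower bound on each integral
  have hlow : ∀ (x : ℝ) (γ : Ω → ℝ) (h1 : IsStoppingTime (Filtration.natural W hBM.meas) (fun ω => (γ ω : WithTop ℝ)))
      (h2 : ∀ ω, γ ω ∈ Set.Icc 0 t),
      g t * p x ≤ ∫ ω, ({ω' | γ ω' < t}.indicator (fun ω' => g (t - γ ω')) ω
        + {ω' | γ ω' = t ∧ 0 ≤ x + W t ω'}.indicator 1 ω) ∂P := by
    intro x γ h1 h2
    have hcalc : g t * p x = ∫ ω, g t * ({ω' | 0 ≤ x + W t ω'}.indicator 1 ω) ∂P := by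
      rw [integral_const_mul, integral_indicator_one (hA x)]; rfl
    rw [hcalc]
    exact integral_mono
      (((integrable_const (1:ℝ)).indicator (hA x)).const_mul _)
      (hint x γ h1 h2) (hptwise x γ h2)
  -- abbreviations for the infimum
  haveI hne : Nonempty {γ : Ω → ℝ // IsStoppingTime (Filtration.natural W hBM.meas) (fun ω => (γ ω : WithTop ℝ)) ∧
      ∀ ω, γ ω ∈ Set.Icc 0 t} :=
    ⟨⟨fun _ => t, isStoppingTime_const _ t, fun ω => ⟨ht, le_rfl⟩⟩⟩
  have hbdd : ∀ x : ℝ, BddBelow (range fun γ : {γ : Ω → ℝ //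
      IsStoppingTime (Filtration.natural W hBM.meas) (fun ω => (γ ω : WithTop ℝ)) ∧ ∀ ω, γ ω ∈ Set.Icc 0 t} =>
      ∫ ω, ({ω' | γ.1 ω' < t}.indicator (fun ω' => g (t - γ.1 ω')) ω
        + {ω' | γ.1 ω' = t ∧ 0 ≤ x + W t ω'}.indicator 1 ω) ∂P) := fun x =>
    ⟨0, by rintro _ ⟨γ, rfl⟩; exact integral_nonneg (hFnonneg x γ.1 γ.2.2)⟩
  have hlower : ∀ x : ℝ, g t * p x ≤ stopValue P W hBM.meas g t x := fun x =>
    le_ciInf fun γ => hlow x γ.1 γ.2.1 γ.2.2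
  have hvnonneg : ∀ x : ℝ, 0 ≤ stopValue P W hBM.meas g t x := fun x =>
    le_ciInf fun γ => integral_nonneg (hFnonneg x γ.1 γ.2.2)
  have hupper_p : ∀ x : ℝ, stopValue P W hBM.meas g t x ≤ p x := by
    intro x
    have hle := ciInf_le (hbdd x)
      (⟨fun _ => t, isStoppingTime_const _ t, fun ω => ⟨ht, le_rfl⟩⟩ :
        {γ : Ω → ℝ // IsStoppingTime (Filtration.natural W hBM.meas) (fun ω => (γ ω : WithTop ℝ)) ∧
          ∀ ω, γ ω ∈ Set.Icc 0 t})
    refine le_trans hle (le_of_eq ?_)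
    have hpx : (∫ ω, ({ω' | 0 ≤ x + W t ω'}.indicator 1 ω) ∂P) = p x :=
      integral_indicator_one (hA x)
    rw [← hpx]
    refine integral_congr_ae (ae_of_all _ fun ω => ?_)
    by_cases hx : 0 ≤ x + W t ω <;> simp [Set.indicator_apply, hx]
  have hupper_g : ∀ x : ℝ, stopValue P W hBM.meas g t x ≤ g t := by
    intro x
    rcases eq_or_lt_of_le ht with ht0 | htpos
    · calc stopValue P W hBM.meas g t x ≤ p x := hupper_p x
        _ ≤ 1 := hp_le_one x
        _ = g t := by rw [← ht0, hg.init]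
    · have hle := ciInf_le (hbdd x)
        (⟨fun _ => (0:ℝ), isStoppingTime_const _ 0, fun ω => ⟨le_rfl, ht⟩⟩ :
          {γ : Ω → ℝ // IsStoppingTime (Filtration.natural W hBM.meas) (fun ω => (γ ω : WithTop ℝ)) ∧
            ∀ ω, γ ω ∈ Set.Icc 0 t})
      refine le_trans hle (le_of_eq ?_)
      have hconst : ∫ _ : Ω, g t ∂P = g t := by simp
      rw [← hconst]
      refine integral_congr_ae (ae_of_all _ fun ω => ?_)
      simp [Set.indicator_apply, htpos, htpos.ne]
  have hmono : Monotone fun x => stopValue P W hBM.meas g t x := by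
    intro a b hab
    refine ciInf_mono (hbdd a) fun γ => ?_
    refine integral_mono (hint a γ.1 γ.2.1 γ.2.2) (hint b γ.1 γ.2.1 γ.2.2) fun ω => ?_
    refine add_le_add le_rfl ?_
    refine Set.indicator_le_indicator_of_subset (fun ω' hω' => ?_)
      (fun _ => zero_le_one) ω
    exact ⟨hω'.1, le_trans hω'.2 (add_le_add hab le_rfl)⟩
  refine ⟨fun x => ⟨hlower x, le_min (hupper_g x) (hupper_p x)⟩, hmono, ?_, ?_⟩
  · exact tendsto_of_tendsto_of_tendsto_of_le_of_le tendsto_const_nhds hp_atBot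
      hvnonneg hupper_p
  · have h1 : Tendsto (fun x => g t * p x) atTop (nhds (g t)) := by
      have := hp_atTop.const_mul (g t)
      simpa using this
    exact tendsto_of_tendsto_of_tendsto_of_le_of_le h1 tendsto_const_nhds
      hlower hupper_g


end
end
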